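/- arXiv:1509.06349 — 5 statements merged into one kernel-verified Lean document; each statement's English description precedes it below -/
import Mathlib

section
/- Let α be irrational with convergent denominators q_k. If n is an integer with 0 < n < q_{k,ℓ} (for k ≥ 2 and 0 < ℓ ≤ a_k) and ‖nα‖ < ‖q_{k,ℓ-1}α‖, then n = m·q_{k-1} for some integer m with 1 ≤ m ≤ min{ℓ, a_k − ℓ + 1}. -/
/-- The Gauss-map iterates of `α`: `cfX α 0 = α`, `cfX α (n+1) = 1/{cfX α n}`. -/
noncomputable def cfX (α : ℝ) : ℕ → ℝ
  | 0 => α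
  | n + 1 => (Int.fract (cfX α n))⁻¹

/-- The partial quotients of the continued fraction expansion of `α`. -/
noncomputable def cfA (α : ℝ) (n : ℕ) : ℤ := ⌊cfX α n⌋

/-- The denominators of the convergents of `α`: `q₀ = 1`, `q₁ = a₁`,
`q_k = a_k q_{k-1} + q_{k-2}`. -/
noncomputable def cfQ (α : ℝ) : ℕ → ℤ
  | 0 => 1
  | 1 => cfA α 1
  | n + 2 => cfA α (n + 2) * cfQ α (n + 1) + cfQ α n

/-- `‖x‖ = min({x}, 1 - {x})`, the distance from `x` to the nearest integer. -/
noncomputable def dni (x : ℝ) : ℝ := min (Int.fract x) (1 - Int.fract x)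


/-- numerators -/
noncomputable def cfP (α : ℝ) : ℕ → ℤ
  | 0 => cfA α 0
  | 1 => cfA α 1 * cfA α 0 + 1
  | n + 2 => cfA α (n + 2) * cfP α (n + 1) + cfP α n

noncomputable def cfF (α : ℝ) (n : ℕ) : ℝ := Int.fract (cfX α n)

noncomputable def cfEta (α : ℝ) : ℕ → ℝ
  | 0 => cfF α 0
  | n + 1 => cfEta α n * cfF α (n + 1)

theorem irr_cfX (α : ℝ) (hα : Irrational α) : ∀ n, Irrational (cfX α n)
  | 0 => hα
  | n + 1 => by
      have h := irr_cfX α hα n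
      have : Irrational (Int.fract (cfX α n)) := by
        rw [← Int.self_sub_floor]
        exact h.sub_intCast ⌊cfX α n⌋
      exact this.inv

theorem cfF_pos (α : ℝ) (hα : Irrational α) (n : ℕ) : 0 < cfF α n := by
  have hi : Irrational (cfF α n) := by
    show Irrational (Int.fract (cfX α n))
    rw [← Int.self_sub_floor]
    exact (irr_cfX α hα n).sub_intCast ⌊cfX α n⌋
  rcases lt_or_eq_of_le (Int.fract_nonneg (cfX α n)) with h | h
  · exact h
  · exact absurd h.symm (by simpa [cfF] using hi.ne_int 0)

theorem cfF_lt_one (α : ℝ) (n : ℕ) : cfF α n < 1 := Int.fract_lt_one _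

theorem cfX_succ_gt_one (α : ℝ) (hα : Irrational α) (n : ℕ) : 1 < cfX α (n + 1) := by
  have h1 := cfF_pos α hα n
  have h2 := cfF_lt_one α n
  show 1 < (cfF α n)⁻¹
  rw [lt_inv_comm₀ one_pos h1]
  simpa using h2

theorem cfA_pos (α : ℝ) (hα : Irrational α) (n : ℕ) : 1 ≤ cfA α (n + 1) := by
  have := cfX_succ_gt_one α hα n
  exact Int.le_floor.mpr (by push_cast; linarith)

theorem cfEta_pos (α : ℝ) (hα : Irrational α) : ∀ n, 0 < cfEta α n
  | 0 => cfF_pos α hα 0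
  | n + 1 => mul_pos (cfEta_pos α hα n) (cfF_pos α hα (n + 1))

theorem cfEta_lt_one (α : ℝ) (hα : Irrational α) : ∀ n, cfEta α n < 1
  | 0 => cfF_lt_one α 0
  | n + 1 => by
      have h1 := cfEta_lt_one α hα n
      have h2 := cfF_lt_one α (n + 1)
      have h3 := cfF_pos α hα (n + 1)
      have h4 := cfEta_pos α hα n
      calc cfEta α n * cfF α (n+1) < cfEta α n * 1 := by nlinarith
        _ < 1 := by linarith

theorem cfEta_succ_lt (α : ℝ) (hα : Irrational α) (n : ℕ) :
    cfEta α (n + 1) < cfEta α n := by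
  have h2 := cfF_lt_one α (n + 1)
  have h3 := cfF_pos α hα (n + 1)
  have h4 := cfEta_pos α hα n
  show cfEta α n * cfF α (n+1) < cfEta α n
  nlinarith

/-- key fract identity -/
theorem cfF_mul (α : ℝ) (hα : Irrational α) (n : ℕ) :
    cfF α n * cfF α (n + 1) = 1 - (cfA α (n + 1) : ℝ) * cfF α n := by
  have h1 := cfF_pos α hα n
  have hx : cfX α (n + 1) = (cfF α n)⁻¹ := rfl
  have hf : cfF α (n + 1) = cfX α (n + 1) - (cfA α (n + 1) : ℝ) := (Int.self_sub_floor _).symm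
  rw [hf, hx]
  field_simp

theorem cfQP (α : ℝ) (hα : Irrational α) :
    ∀ n, (cfQ α n : ℝ) * α - (cfP α n : ℝ) = (-1) ^ n * cfEta α n
  | 0 => by
      simp [cfQ, cfP, cfEta, cfF, cfA, cfX, Int.self_sub_floor]
  | 1 => by
      have key := cfF_mul α hα 0
      have : cfF α 0 = α - (cfA α 0 : ℝ) := (Int.self_sub_floor _).symm
      have e1 : cfEta α 1 = cfF α 0 * cfF α 1 := by
        show cfEta α 0 * cfF α 1 = _; rfl
      simp only [cfQ, cfP, pow_one, e1]
      push_cast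
      linear_combination key - (cfA α 1 : ℝ) * this
  | n + 2 => by
      have h1 := cfQP α hα n
      have h2 : (cfQ α (n+1) : ℝ) * α - (cfP α (n+1) : ℝ)
          = (-1) ^ (n+1) * (cfEta α n * cfF α (n + 1)) := cfQP α hα (n + 1)
      have key := cfF_mul α hα (n + 1)
      show ((cfA α (n+2) * cfQ α (n+1) + cfQ α n : ℤ) : ℝ) * α
          - ((cfA α (n+2) * cfP α (n+1) + cfP α n : ℤ) : ℝ)
          = (-1) ^ (n+2) * (cfEta α n * cfF α (n + 1) * cfF α (n + 2))
      push_cast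
      linear_combination (cfA α (n+2) : ℝ) * h2 + h1
        - ((-1:ℝ)^n * cfEta α n) * key

theorem cfEta_rec (α : ℝ) (hα : Irrational α) (n : ℕ) :
    cfEta α (n + 2) = cfEta α n - (cfA α (n + 2) : ℝ) * cfEta α (n + 1) := by
  have key := cfF_mul α hα (n + 1)
  show cfEta α n * cfF α (n + 1) * cfF α (n + 2)
      = cfEta α n - (cfA α (n + 2) : ℝ) * (cfEta α n * cfF α (n + 1))
  linear_combination cfEta α n * key

theorem cfQ_pos (α : ℝ) (hα : Irrational α) : ∀ n, 1 ≤ cfQ α n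
  | 0 => le_refl _
  | 1 => cfA_pos α hα 0
  | n + 2 => by
      have h1 := cfQ_pos α hα n
      have h2 := cfQ_pos α hα (n + 1)
      have h3 := cfA_pos α hα (n + 1)
      show 1 ≤ cfA α (n + 2) * cfQ α (n + 1) + cfQ α n
      nlinarith

theorem cfQ_mono (α : ℝ) (hα : Irrational α) : ∀ n, cfQ α n ≤ cfQ α (n + 1)
  | 0 => cfA_pos α hα 0
  | n + 1 => by
      have h1 := cfQ_pos α hα n
      have h2 := cfQ_pos α hα (n + 1)
      have h3 := cfA_pos α hα (n + 1)
      show cfQ α (n + 1) ≤ cfA α (n + 2) * cfQ α (n + 1) + cfQ α n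
      nlinarith

theorem cfDet (α : ℝ) : ∀ n, cfQ α (n + 1) * cfP α n - cfP α (n + 1) * cfQ α n = (-1) ^ (n + 1)
  | 0 => by
      show cfA α 1 * cfA α 0 - (cfA α 1 * cfA α 0 + 1) * 1 = (-1) ^ 1
      ring
  | n + 1 => by
      have h := cfDet α n
      show (cfA α (n+2) * cfQ α (n+1) + cfQ α n) * cfP α (n+1)
          - (cfA α (n+2) * cfP α (n+1) + cfP α n) * cfQ α (n+1) = (-1) ^ (n+2)
      have : (-1 : ℤ) ^ (n + 2) = -(-1) ^ (n + 1) := by ring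
      rw [this, ← h]; ring

theorem dni_le (y : ℝ) (c : ℤ) : dni y ≤ |y - c| := by
  show min (Int.fract y) (1 - Int.fract y) ≤ _
  rw [← abs_sub_round_eq_min]
  exact round_le y c

theorem dni_eq (y : ℝ) : dni y = |y - round y| := by
  show min (Int.fract y) (1 - Int.fract y) = _
  rw [abs_sub_round_eq_min]

set_option maxHeartbeats 1000000 in
/-- if `0 < n < q_{k,ℓ}` (with `k ≥ 2`, `0 < ℓ ≤ a_k`) and
`‖nα‖ < ‖q_{k,ℓ-1}α‖`, then `n = m·q_{k-1}` for some `1 ≤ m ≤ min{ℓ, a_k − ℓ + 1}`. -/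
theorem closest_points (α : ℝ) (hα : Irrational α) (k : ℕ) (hk : 2 ≤ k)
    (ℓ : ℤ) (hℓ : 0 < ℓ) (hℓ' : ℓ ≤ cfA α k)
    (n : ℤ) (hn : 0 < n) (hn' : n < ℓ * cfQ α (k - 1) + cfQ α (k - 2))
    (h : dni ((n : ℝ) * α) <
        dni ((((ℓ - 1) * cfQ α (k - 1) + cfQ α (k - 2) : ℤ) : ℝ) * α)) :
    ∃ m : ℤ, 1 ≤ m ∧ m ≤ min ℓ (cfA α k - ℓ + 1) ∧ n = m * cfQ α (k - 1) := by
  obtain ⟨j, rfl⟩ : ∃ j, k = j + 2 := ⟨k - 2, by omega⟩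
  simp only [show j + 2 - 1 = j + 1 by omega, show j + 2 - 2 = j by omega] at hn' h ⊢
  -- abbreviations
  set a : ℤ := cfA α (j + 2) with ha
  set q1 : ℤ := cfQ α (j + 1) with hq1def
  set q0 : ℤ := cfQ α j with hq0def
  set p1 : ℤ := cfP α (j + 1) with hp1def
  set p0 : ℤ := cfP α j with hp0def
  set η1 : ℝ := cfEta α (j + 1) with hη1def
  set η0 : ℝ := cfEta α j with hη0def
  set η2 : ℝ := cfEta α (j + 2) with hη2def
  have hdet : q1 * p0 - p1 * q0 = (-1) ^ (j + 1) := cfDet α j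
  have hqp1 : (q1 : ℝ) * α - p1 = (-1) ^ (j + 1) * η1 := cfQP α hα (j + 1)
  have hqp0 : (q0 : ℝ) * α - p0 = (-1) ^ j * η0 := cfQP α hα j
  have hrec : η2 = η0 - (a : ℝ) * η1 := cfEta_rec α hα j
  have hη1pos : 0 < η1 := cfEta_pos α hα (j + 1)
  have hη2pos : 0 < η2 := cfEta_pos α hα (j + 2)
  have hη21 : η2 < η1 := cfEta_succ_lt α hα (j + 1)
  have hq1 : 1 ≤ q1 := cfQ_pos α hα (j + 1)
  have hq0 : 1 ≤ q0 := cfQ_pos α hα j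
  have hq01 : q0 ≤ q1 := cfQ_mono α hα j
  set d : ℤ := (-1) ^ (j + 1) with hdd
  have hd2 : d * d = 1 := by
    rw [hdd, ← pow_add]
    exact Even.neg_one_pow ⟨j + 1, by ring⟩
  set q' : ℤ := (ℓ - 1) * q1 + q0 with hq'def
  set p' : ℤ := (ℓ - 1) * p1 + p0 with hp'def
  have hq'pos : 1 ≤ q' := by
    rw [hq'def]
    have := mul_nonneg (show (0:ℤ) ≤ ℓ - 1 by omega) (show (0:ℤ) ≤ q1 by omega)
    linarith
  have hdet' : q1 * p' - p1 * q' = d := by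
    rw [hq'def, hp'def, hdd]; linear_combination hdet
  set c : ℤ := round ((n : ℝ) * α) with hcdef
  set x : ℤ := d * (n * p' - c * q') with hxdef
  set y : ℤ := d * (c * q1 - n * p1) with hydef
  have hxq : x * q1 + y * q' = n := by
    rw [hxdef, hydef]; linear_combination (d * n) * hdet' + n * hd2
  have hxp : x * p1 + y * p' = c := by
    rw [hxdef, hydef]; linear_combination (d * c) * hdet' + c * hd2
  have hq : (x : ℝ) * q1 + (y : ℝ) * q' = n := by exact_mod_cast congrArg (Int.cast : ℤ → ℝ) hxq
  have hp : (x : ℝ) * p1 + (y : ℝ) * p' = c := by exact_mod_cast congrArg (Int.cast : ℤ → ℝ) hxp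
  have hreal : (n : ℝ) * α - c = (x : ℝ) * ((q1 : ℝ) * α - p1) + (y : ℝ) * ((q' : ℝ) * α - p') := by
    linear_combination (-α) * hq + hp
  set E : ℝ := η0 - ((ℓ : ℝ) - 1) * η1 with hEdef
  have hla : (ℓ : ℝ) ≤ (a : ℝ) := by exact_mod_cast hℓ'
  have hE : 0 < E := by
    rw [hEdef]
    have := mul_nonneg (show (0:ℝ) ≤ (a:ℝ) - ℓ by linarith) hη1pos.le
    linarith [this, hrec, hη1pos, hη2pos]
  have key' : ((q' : ℤ) : ℝ) * α - ((p' : ℤ) : ℝ) = (-1) ^ j * E := by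
    rw [hq'def, hp'def, hEdef]; push_cast
    linear_combination ((ℓ : ℝ) - 1) * hqp1 + hqp0
  have hE_dni : dni (((q' : ℤ) : ℝ) * α) ≤ E := by
    calc dni (((q' : ℤ) : ℝ) * α) ≤ |((q' : ℤ) : ℝ) * α - p'| := dni_le _ p'
      _ = |(-1 : ℝ) ^ j * E| := by rw [key']
      _ = E := by rw [abs_mul, abs_pow, abs_neg, abs_one, one_pow, one_mul, abs_of_pos hE]
  have hval : (n : ℝ) * α - c = (-1 : ℝ) ^ (j + 1) * ((x : ℝ) * η1 - (y : ℝ) * E) := by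
    rw [hreal, hqp1, key']; ring
  have hdnin : dni ((n : ℝ) * α) = |(x : ℝ) * η1 - (y : ℝ) * E| := by
    rw [dni_eq, ← hcdef, hval, abs_mul, abs_pow, abs_neg, abs_one, one_pow, one_mul]
  have habs : |(x : ℝ) * η1 - (y : ℝ) * E| < E := by
    rw [← hdnin]; exact lt_of_lt_of_le h hE_dni
  clear_value a q1 q0 p1 p0 η1 η0 η2 d q' p' c x y E
  by_cases hy : y = 0
  · -- the main case: n = x * q1
    rw [hy] at hxq
    simp only [zero_mul, add_zero] at hxq
    have hx1 : 1 ≤ x := by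
      by_contra hcon
      have hx0 : x ≤ 0 := by omega
      have := mul_nonpos_of_nonpos_of_nonneg hx0 (show (0:ℤ) ≤ q1 by omega)
      omega
    have hx1r : (1 : ℝ) ≤ (x : ℝ) := by exact_mod_cast hx1
    rw [hy] at habs
    simp only [Int.cast_zero, zero_mul, sub_zero] at habs
    rw [abs_of_pos (mul_pos (by linarith : (0:ℝ) < (x : ℝ)) hη1pos)] at habs
    refine ⟨x, hx1, le_min ?_ ?_, hxq.symm⟩
    · -- x ≤ ℓ
      by_contra hcon
      push_neg at hcon
      have h1 : (ℓ + 1) * q1 ≤ x * q1 :=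
        mul_le_mul_of_nonneg_right (by omega) (by omega)
      have : (ℓ + 1) * q1 = ℓ * q1 + q1 := by ring
      omega
    · -- x ≤ a - ℓ + 1
      by_contra hcon
      push_neg at hcon
      have hxr2 : ((a : ℝ) - (ℓ : ℝ) + 2) ≤ (x : ℝ) := by
        have : a - ℓ + 2 ≤ x := by omega
        exact_mod_cast this
      have h1 := mul_le_mul_of_nonneg_right hxr2 hη1pos.le
      rw [hEdef] at habs
      linarith [h1, habs, hrec, hη21]
  · -- contradiction cases
    exfalso
    rcases lt_trichotomy x 0 with hx | hx | hx
    · have hxr : (x : ℝ) ≤ -1 := by exact_mod_cast (by omega : x ≤ -1)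
      rcases lt_trichotomy y 0 with hyy | hyy | hyy
      · -- x < 0, y < 0 : n < 0
        have h1 : x * q1 ≤ (-1) * q1 :=
          mul_le_mul_of_nonneg_right (by omega) (by omega)
        have h2 : y * q' ≤ (-1) * q' :=
          mul_le_mul_of_nonneg_right (by omega) (by omega)
        omega
      · exact hy hyy
      · -- x < 0, y > 0
        have hyr : (1 : ℝ) ≤ (y : ℝ) := by exact_mod_cast hyy
        have h1 : (x : ℝ) * η1 ≤ (-1) * η1 := mul_le_mul_of_nonneg_right hxr hη1pos.le
        have h2 : (1 : ℝ) * E ≤ (y : ℝ) * E := mul_le_mul_of_nonneg_right hyr hE.le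
        have h3 : E ≤ -((x : ℝ) * η1 - (y : ℝ) * E) := by linarith [h1, h2, hη1pos]
        have := le_trans h3 (neg_le_abs _)
        linarith
    · -- x = 0
      rw [hx] at hxq habs
      simp only [zero_mul, zero_add] at hxq
      simp only [Int.cast_zero, zero_mul, zero_sub, abs_neg] at habs
      have hyy : 1 ≤ y := by
        by_contra hcon
        have hy0 : y ≤ 0 := by omega
        have := mul_nonpos_of_nonpos_of_nonneg hy0 (show (0:ℤ) ≤ q' by omega)
        omega
      have hyr : (1 : ℝ) ≤ (y : ℝ) := by exact_mod_cast hyy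
      have h2 : (1 : ℝ) * E ≤ (y : ℝ) * E := mul_le_mul_of_nonneg_right hyr hE.le
      rw [abs_of_pos (by linarith : (0:ℝ) < (y : ℝ) * E)] at habs
      linarith
    · have hxr : (1 : ℝ) ≤ (x : ℝ) := by exact_mod_cast hx
      rcases lt_trichotomy y 0 with hyy | hyy | hyy
      · -- x > 0, y < 0
        have hyr : (y : ℝ) ≤ -1 := by exact_mod_cast (by omega : y ≤ -1)
        have h1 : (1 : ℝ) * η1 ≤ (x : ℝ) * η1 := mul_le_mul_of_nonneg_right hxr hη1pos.le
        have h2 : (y : ℝ) * E ≤ (-1) * E := mul_le_mul_of_nonneg_right hyr hE.le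
        have h3 : E ≤ (x : ℝ) * η1 - (y : ℝ) * E := by linarith [h1, h2, hη1pos, hE]
        have := le_trans h3 (le_abs_self _)
        linarith
      · exact hy hyy
      · -- x > 0, y > 0 : n ≥ q1 + q'
        have h1 : 1 * q1 ≤ x * q1 := mul_le_mul_of_nonneg_right (by omega) (by omega)
        have h2 : 1 * q' ≤ y * q' := mul_le_mul_of_nonneg_right (by omega) (by omega)
        have h3 : ℓ * q1 + q0 = q1 + q' - q1 + q1 := by rw [hq'def]; ring
        have : q1 + q' ≤ x * q1 + y * q' := by omega
        omega
end

section
/- Let s_{x,α} be the Sturmian word of irrational slope α ∈ (0, 1/2) and intercept x, obtained as the coding of the orbit of x under rotation by α with intervals I₀ = [0, 1−α) coded by 0 and I₁ = [1−α, 1) coded by 1. Writing s_{x,α} uniquely as a product of minimal squares s_{x,α} = X₁² X₂² X₃² ⋯, the word X₁ X₂ X₃ ⋯ equals s_{ψ(x),α} where ψ(x) = (x + 1 − α)/2 (computed on the circle). In particular, the square root of a Sturmian word of slope α is a Sturmian word of the same slope α. -/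
open Classical in
/-- The Sturmian word of slope `α` and intercept `x`: the `n`-th letter codes
whether the point `{x + nα}` lies in `I₁ = [1−α, 1)` (letter `true` = 1) or in
`I₀ = [0, 1−α)` (letter `false` = 0). -/
noncomputable def sturmian (α x : ℝ) (n : ℕ) : Bool :=
  if 1 - α ≤ Int.fract (x + n * α) then true else false

open Classical in
/-- The Sturmian word of slope `α` and intercept `x` with the other convention:
`I₀ = (0, 1−α]` coded by `false` and `I₁ = (1−α, 1]` (i.e. `(1−α,1) ∪ {0}`) by `true`. -/
noncomputable def sturmian' (α x : ℝ) (n : ℕ) : Bool :=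
  if Int.fract (x + n * α) = 0 ∨ 1 - α < Int.fract (x + n * α) then true else false

/-- `w` is a prefix of the infinite word `s`. -/
def IsPref (w : List Bool) (s : ℕ → Bool) : Prop :=
  ∀ i, i < w.length → w.getD i false = s i

/-- `w` belongs to the language `L(α)` of factors of Sturmian words of slope `α`. -/
def inLang (α : ℝ) (w : List Bool) : Prop :=
  ∃ x ∈ Set.Ico (0 : ℝ) 1, ∃ k : ℕ, ∀ i < w.length, w.getD i false = sturmian α x (k + i)

/-- The map `ψ(x) = (x + 1 − α)/2` on the circle `[0,1)`, with `ψ(0) = (1−α)/2`. -/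
noncomputable def psi (α x : ℝ) : ℝ := if x = 0 then (1 - α) / 2 else (x + 1 - α) / 2

/-! ### Auxiliary lemmas -/

/-- The backward orbit of `0`: the point `{j(1-α)}`. -/
noncomputable def SqrtAux.pt (α : ℝ) (j : ℕ) : ℝ := Int.fract ((j : ℝ) * (1 - α))

namespace SqrtAux

lemma sturmian_true {α z : ℝ} {n : ℕ} (h : 1 - α ≤ Int.fract (z + n * α)) :
    sturmian α z n = true := by
  unfold sturmian; exact if_pos h

lemma sturmian_false {α z : ℝ} {n : ℕ} (h : ¬ (1 - α ≤ Int.fract (z + n * α))) :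
    sturmian α z n = false := by
  unfold sturmian; exact if_neg h

lemma sturmian_congr {α z z' : ℝ} {n n' : ℕ}
    (h : Int.fract (z + n * α) = Int.fract (z' + n' * α)) :
    sturmian α z n = sturmian α z' n' := by
  by_cases hc : 1 - α ≤ Int.fract (z + n * α)
  · rw [sturmian_true hc, sturmian_true (h ▸ hc)]
  · rw [sturmian_false hc, sturmian_false (fun hc' => hc (h ▸ hc'))]

lemma fract_fract_add (a b : ℝ) : Int.fract (Int.fract a + b) = Int.fract (a + b) := by
  have h : Int.fract a + b = a + b - ((⌊a⌋ : ℤ) : ℝ) := by unfold Int.fract; push_cast; ring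
  rw [h, Int.fract_sub_intCast]

lemma sturmian_shift (α z : ℝ) (k m : ℕ) :
    sturmian α (Int.fract (z + k * α)) m = sturmian α z (k + m) := by
  apply sturmian_congr
  rw [fract_fract_add]
  congr 1
  push_cast
  ring

lemma pt_zero (α : ℝ) : pt α 0 = 0 := by simp [pt]

lemma pt_one {α : ℝ} (h0 : 0 < α) (h1 : α < 1) : pt α 1 = 1 - α := by
  unfold pt
  rw [show ((1 : ℕ) : ℝ) * (1 - α) = 1 - α by push_cast; ring]
  exact Int.fract_eq_self.mpr ⟨by linarith, by linarith⟩

/-- Core letter comparison: if neither `pt n` nor `pt (n+1)` lies in the arc `(z, z+δ]`,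
then the `n`-th letters of the Sturmian words with intercepts `z` and `z + δ` agree. -/
lemma letter_eq {α : ℝ} (h1 : α < 1) {z δ : ℝ} (hz : 0 ≤ z) (hδ : 0 < δ)
    (hzδ : z + δ < 1) (n : ℕ)
    (hA : ¬(z < pt α n ∧ pt α n ≤ z + δ))
    (hB : ¬(z < pt α (n + 1) ∧ pt α (n + 1) ≤ z + δ)) :
    sturmian α z n = sturmian α (z + δ) n := by
  set w := Int.fract (z + n * α) with hw
  have hw0 : 0 ≤ w := Int.fract_nonneg _
  have hw1 : w < 1 := Int.fract_lt_one _
  have hptn : pt α n = Int.fract (z - w) := by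
    unfold pt
    rw [Int.fract_eq_fract]
    exact ⟨(n : ℤ) - ⌊z + n * α⌋, by rw [hw, Int.fract]; push_cast; ring⟩
  have hwlt : w < 1 - δ := by
    by_contra hcon
    push_neg at hcon
    apply hA
    have hzw : z < w := by linarith
    have hpv : pt α n = z - w + 1 := by
      have hsh : Int.fract (z - w) = Int.fract (z - w + 1) := by
        rw [show z - w + 1 = (z - w) + ((1 : ℤ) : ℝ) by push_cast; ring, Int.fract_add_intCast]
      have hself : Int.fract (z - w + 1) = z - w + 1 :=
        Int.fract_eq_self.mpr ⟨by linarith, by linarith⟩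
      rw [hptn, hsh, hself]
    rw [hpv]
    constructor <;> linarith
  have hwβ : ¬(1 - α - δ ≤ w ∧ w < 1 - α) := by
    rintro ⟨hb1, hb2⟩
    apply hB
    have hptn1 : pt α (n + 1) = Int.fract (z - w - α) := by
      unfold pt
      rw [Int.fract_eq_fract]
      exact ⟨(n : ℤ) + 1 - ⌊z + n * α⌋, by rw [hw, Int.fract]; push_cast; ring⟩
    have hpv : pt α (n + 1) = z - w - α + 1 := by
      have hsh : Int.fract (z - w - α) = Int.fract (z - w - α + 1) := by
        rw [show z - w - α + 1 = (z - w - α) + ((1 : ℤ) : ℝ) by push_cast; ring,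
          Int.fract_add_intCast]
      have hself : Int.fract (z - w - α + 1) = z - w - α + 1 :=
        Int.fract_eq_self.mpr ⟨by linarith, by linarith⟩
      rw [hptn1, hsh, hself]
    rw [hpv]
    constructor <;> linarith
  have hfr : Int.fract (z + δ + n * α) = w + δ := by
    have hself : Int.fract (w + δ) = w + δ :=
      Int.fract_eq_self.mpr ⟨by linarith, by linarith⟩
    rw [show z + δ + n * α = (z + n * α) + δ by ring, ← fract_fract_add, ← hw, hself]
  by_cases hc : 1 - α ≤ w
  · rw [sturmian_true (by rw [← hw]; exact hc), sturmian_true (by rw [hfr]; linarith)]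
  · push_neg at hc
    have hlt : w < 1 - α - δ := by
      rcases lt_or_ge w (1 - α - δ) with h | h
      · exact h
      · exact absurd ⟨h, hc⟩ hwβ
    rw [sturmian_false (by rw [← hw]; push_neg; linarith),
      sturmian_false (by rw [hfr]; push_neg; linarith)]

/-- If some `pt j` with `2 ≤ j ≤ q` lies strictly between `y` and `1-α`
(in the direction-dependent half-open sense), then minimality of `q` is violated:
there is a square prefix of length `2(j-1)`. -/
lemma no_btw {α : ℝ} (h0 : 0 < α) (h2 : α < 1 / 2) {y : ℝ} (hy0 : 0 ≤ y) (hy1 : y < 1)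
    (q : ℕ)
    (Hmin : ∀ q', 1 ≤ q' → q' < q →
      ∃ n, n < q' ∧ sturmian α y n ≠ sturmian α y (n + q')) :
    ∀ j, 2 ≤ j → j ≤ q →
      ¬((y < pt α j ∧ pt α j < 1 - α) ∨ (1 - α < pt α j ∧ pt α j ≤ y)) := by
  have h1 : α < 1 := by linarith
  intro j
  induction j using Nat.strong_induction_on with
  | _ j IH =>
    intro hj2 hjq hbtw
    have hjcast : (((j - 1 : ℕ)) : ℝ) = (j : ℝ) - 1 := by
      push_cast [Nat.cast_sub (by omega : 1 ≤ j)]; ring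
    have hptj0 : 0 ≤ pt α j := Int.fract_nonneg _
    -- In either case we produce a square of length 2*(j-1), contradicting Hmin.
    have hsq : ∀ n, n < j - 1 → sturmian α y n = sturmian α y (n + (j - 1)) := by
      rcases hbtw with ⟨hby, hbβ⟩ | ⟨hbβ, hby⟩
      · -- case y < pt j < 1 - α
        set δ := 1 - α - pt α j with hδdef
        have hδ : 0 < δ := by simp only [hδdef]; linarith
        have hsum : y + δ < 1 := by simp only [hδdef]; linarith
        have hkey : ∀ n : ℕ, sturmian α y (n + (j - 1)) = sturmian α (y + δ) n := by
          intro n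
          rw [show n + (j - 1) = (j - 1) + n by omega, ← sturmian_shift α y (j - 1) n]
          apply sturmian_congr
          rw [fract_fract_add, Int.fract_eq_fract]
          refine ⟨(j : ℤ) - 1 - ⌊(j : ℝ) * (1 - α)⌋, ?_⟩
          simp only [hδdef, pt, Int.fract]
          rw [hjcast]
          push_cast
          ring
        have hno : ∀ m, m ≤ j - 1 → ¬(y < pt α m ∧ pt α m ≤ y + δ) := by
          intro m hm hcon
          obtain ⟨c1, c2⟩ := hcon
          match m with
          | 0 => rw [pt_zero] at c1; linarith
          | 1 => rw [pt_one h0 h1] at c2; simp only [hδdef] at c2; linarith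
          | (m + 2) =>
            exact IH (m + 2) (by omega) (by omega) (by omega)
              (Or.inl ⟨c1, by simp only [hδdef] at c2; linarith⟩)
        intro n hn
        rw [hkey n]
        exact letter_eq h1 hy0 hδ hsum n (hno n (by omega)) (hno (n + 1) (by omega))
      · -- case 1 - α < pt j ≤ y
        set δ := pt α j - (1 - α) with hδdef
        set z := y - δ with hzdef
        have hδ : 0 < δ := by simp only [hδdef]; linarith
        have hz0 : 1 - α ≤ z := by simp only [hzdef, hδdef]; linarith
        have hzδ : z + δ = y := by simp only [hzdef]; ring
        have hkey : ∀ n : ℕ, sturmian α y (n + (j - 1)) = sturmian α z n := by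
          intro n
          rw [show n + (j - 1) = (j - 1) + n by omega, ← sturmian_shift α y (j - 1) n]
          apply sturmian_congr
          rw [fract_fract_add, Int.fract_eq_fract]
          refine ⟨(j : ℤ) - 1 - ⌊(j : ℝ) * (1 - α)⌋, ?_⟩
          simp only [hzdef, hδdef, pt, Int.fract]
          rw [hjcast]
          push_cast
          ring
        have hno : ∀ m, m ≤ j - 1 → ¬(z < pt α m ∧ pt α m ≤ z + δ) := by
          intro m hm hcon
          obtain ⟨c1, c2⟩ := hcon
          rw [hzδ] at c2
          match m with
          | 0 => rw [pt_zero] at c1; linarith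
          | 1 => rw [pt_one h0 h1] at c1; linarith
          | (m + 2) =>
            exact IH (m + 2) (by omega) (by omega) (by omega)
              (Or.inr ⟨by linarith, c2⟩)
        intro n hn
        rw [hkey n]
        have := letter_eq h1 (by linarith : (0:ℝ) ≤ z) hδ (by rw [hzδ]; exact hy1) n
          (hno n (by omega)) (hno (n + 1) (by omega))
        rw [hzδ] at this
        exact this.symm
    obtain ⟨n, hn, hne⟩ := Hmin (j - 1) (by omega) (by omega)
    exact hne (hsq n hn)

/-- Letters of the square root agree with the original word within a minimal square. -/
lemma letters {α : ℝ} (h0 : 0 < α) (h2 : α < 1 / 2) {y : ℝ} (hy0 : 0 ≤ y) (hy1 : y < 1)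
    (q : ℕ)
    (Hmin : ∀ q', 1 ≤ q' → q' < q →
      ∃ n, n < q' ∧ sturmian α y n ≠ sturmian α y (n + q')) :
    ∀ i, i < q → sturmian α ((y + (1 - α)) / 2) i = sturmian α y i := by
  have h1 : α < 1 := by linarith
  have hnb := no_btw h0 h2 hy0 hy1 q Hmin
  rcases lt_trichotomy y (1 - α) with hlt | heq | hgt
  · intro i hi
    have hno : ∀ m, m ≤ q → ¬(y < pt α m ∧ pt α m ≤ y + (1 - α - y) / 2) := by
      intro m hm hcon
      obtain ⟨c1, c2⟩ := hcon
      match m with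
      | 0 => rw [pt_zero] at c1; linarith
      | 1 => rw [pt_one h0 h1] at c2; linarith
      | (m + 2) =>
        exact hnb (m + 2) (by omega) (by omega) (Or.inl ⟨c1, by linarith⟩)
    have := letter_eq h1 hy0 (by linarith : (0:ℝ) < (1 - α - y) / 2) (by linarith) i
      (hno i (by omega)) (hno (i + 1) (by omega))
    rw [show y + (1 - α - y) / 2 = (y + (1 - α)) / 2 by ring] at this
    exact this.symm
  · intro i hi
    rw [show (y + (1 - α)) / 2 = y by rw [← heq]; ring]
  · intro i hi
    have hz0 : (0:ℝ) ≤ (y + (1 - α)) / 2 := by linarith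
    have hno : ∀ m, m ≤ q →
        ¬((y + (1 - α)) / 2 < pt α m ∧ pt α m ≤ (y + (1 - α)) / 2 + (y - (1 - α)) / 2) := by
      intro m hm hcon
      obtain ⟨c1, c2⟩ := hcon
      rw [show (y + (1 - α)) / 2 + (y - (1 - α)) / 2 = y by ring] at c2
      match m with
      | 0 => rw [pt_zero] at c1; linarith
      | 1 => rw [pt_one h0 h1] at c1; linarith
      | (m + 2) =>
        exact hnb (m + 2) (by omega) (by omega) (Or.inr ⟨by linarith, c2⟩)
    have := letter_eq h1 hz0 (by linarith : (0:ℝ) < (y - (1 - α)) / 2)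
      (by linarith : (y + (1 - α)) / 2 + (y - (1 - α)) / 2 < 1) i
      (hno i (by omega)) (hno (i + 1) (by omega))
    rw [show (y + (1 - α)) / 2 + (y - (1 - α)) / 2 = y by ring] at this
    exact this

/-- `⌊y + Nα⌋` counts the ones among the first `N` letters. -/
lemma floor_count {α : ℝ} (h0 : 0 < α) (h1 : α < 1) {y : ℝ} (hy0 : 0 ≤ y) (hy1 : y < 1) :
    ∀ N : ℕ, ⌊y + (N : ℝ) * α⌋ =
      ∑ n ∈ Finset.range N, (if sturmian α y n = true then (1 : ℤ) else 0) := by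
  intro N
  induction N with
  | zero =>
    simp only [Finset.range_zero, Finset.sum_empty, Nat.cast_zero, zero_mul, add_zero]
    exact Int.floor_eq_zero_iff.mpr ⟨hy0, hy1⟩
  | succ N ih =>
    rw [Finset.sum_range_succ, ← ih]
    set w := Int.fract (y + N * α) with hw
    have hw0 : 0 ≤ w := Int.fract_nonneg _
    have hw1 : w < 1 := Int.fract_lt_one _
    have hfl : ⌊y + ((N + 1 : ℕ) : ℝ) * α⌋ = ⌊w + α⌋ + ⌊y + (N : ℝ) * α⌋ := by
      rw [show y + ((N + 1 : ℕ) : ℝ) * α = (w + α) + ((⌊y + (N : ℝ) * α⌋ : ℤ) : ℝ) by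
        rw [hw, Int.fract]; push_cast; ring, Int.floor_add_intCast]
    rw [hfl]
    by_cases hc : 1 - α ≤ w
    · have hite : (if sturmian α y N = true then (1 : ℤ) else 0) = 1 :=
        if_pos (sturmian_true (by rw [← hw]; exact hc))
      have hfa : ⌊w + α⌋ = 1 := by
        rw [Int.floor_eq_iff]
        constructor <;> push_cast <;> linarith
      rw [hite, hfa]; omega
    · push_neg at hc
      have hst : sturmian α y N = false := sturmian_false (by rw [← hw]; push_neg; exact hc)
      have hite : (if sturmian α y N = true then (1 : ℤ) else 0) = 0 :=
        if_neg (by simp [hst])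
      have hfa : ⌊w + α⌋ = 0 := by
        rw [Int.floor_eq_zero_iff]
        exact ⟨by linarith, by linarith⟩
      rw [hite, hfa]; omega

/-- The ψ-conjugacy step: after reading a square of length `2q`, the square root
point advances by `qα`. -/
lemma psi_step {α : ℝ} (h0 : 0 < α) (h1 : α < 1) {y : ℝ} (hy0 : 0 ≤ y) (hy1 : y < 1)
    (q : ℕ)
    (Hsq : ∀ n, n < q → sturmian α y n = sturmian α y (n + q)) :
    Int.fract ((y + (1 - α)) / 2 + (q : ℝ) * α)
      = (Int.fract (y + ((2 * q : ℕ) : ℝ) * α) + (1 - α)) / 2 := by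
  set T := Int.fract (y + ((2 * q : ℕ) : ℝ) * α) with hT
  have hT0 : 0 ≤ T := Int.fract_nonneg _
  have hT1 : T < 1 := Int.fract_lt_one _
  set f : ℕ → ℤ := fun n => if sturmian α y n = true then (1 : ℤ) else 0 with hf
  have hcount := floor_count h0 h1 hy0 hy1 (2 * q)
  have hsum : ∑ n ∈ Finset.range (2 * q), f n = 2 * ∑ n ∈ Finset.range q, f n := by
    rw [show 2 * q = q + q by omega, Finset.sum_range_add]
    have : ∀ n ∈ Finset.range q, f (q + n) = f n := by
      intro n hn
      simp only [hf]
      rw [show q + n = n + q by omega, ← Hsq n (Finset.mem_range.mp hn)]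
    rw [Finset.sum_congr rfl this]
    ring
  set S := ∑ n ∈ Finset.range q, f n with hS
  have hM : ⌊y + ((2 * q : ℕ) : ℝ) * α⌋ = 2 * S := by rw [hcount, hsum]
  have hexp : (y + (1 - α)) / 2 + (q : ℝ) * α = (T + (1 - α)) / 2 + ((S : ℤ) : ℝ) := by
    have h1' : y + ((2 * q : ℕ) : ℝ) * α = T + ((2 * S : ℤ) : ℝ) := by
      rw [hT, Int.fract, ← hM]; push_cast; ring
    push_cast at h1' ⊢
    linarith
  have hself : Int.fract ((T + (1 - α)) / 2) = (T + (1 - α)) / 2 :=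
    Int.fract_eq_self.mpr ⟨by linarith, by linarith⟩
  rw [hexp, Int.fract_add_intCast, hself]

end SqrtAux

open SqrtAux in
/-- if the Sturmian word `s_{x,α}` (slope `α ∈ (0,1/2)` irrational,
intercept `x ∈ [0,1)`) is written as the product of minimal squares
`X₁²X₂²X₃²⋯`, then the square root `X₁X₂X₃⋯` is the Sturmian word `s_{ψ(x),α}`
of the same slope `α` and intercept `ψ(x) = (x + 1 − α)/2`. -/
theorem sqrt_sturmian (α x : ℝ) (hα : Irrational α) (h0 : 0 < α) (h2 : α < 1 / 2)
    (hx : x ∈ Set.Ico (0 : ℝ) 1) (X : ℕ → List Bool)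
    (hne : ∀ n, X n ≠ [])
    (hmin : ∀ n, ∀ v : List Bool, v ≠ [] → (v ++ v) <+: (X n ++ X n) → v = X n)
    (hfact : ∀ n, IsPref (List.flatten ((List.range n).map fun i => X i ++ X i))
      (sturmian α x)) :
    ∀ n, IsPref (List.flatten ((List.range n).map X)) (sturmian α (psi α x)) := by
  obtain ⟨hx0, hx1⟩ := hx
  have h1 : α < 1 := by linarith
  have hfact' : ∀ n, IsPref (((List.range n).map fun i => X i ++ X i).flatten)
      (sturmian α x) := hfact
  clear hfact
  suffices hgoal : ∀ n, IsPref (((List.range n).map X).flatten) (sturmian α (psi α x))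
    from hgoal
  have psix : psi α x = (x + (1 - α)) / 2 := by
    unfold psi
    split
    · next h => rw [h]; ring
    · ring
  set K : ℕ → ℕ := fun n => ∑ i ∈ Finset.range n, (X i).length with hK
  set Y : ℕ → ℝ := fun n => Int.fract (x + ((2 * K n : ℕ) : ℝ) * α) with hYdef
  have hKs : ∀ n, K (n + 1) = K n + (X n).length := fun n => Finset.sum_range_succ _ n
  have hY0 : ∀ n, 0 ≤ Y n := fun n => Int.fract_nonneg _
  have hY1 : ∀ n, Y n < 1 := fun n => Int.fract_lt_one _
  have hqpos : ∀ n, 1 ≤ (X n).length := fun n => List.length_pos_iff.mpr (hne n)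
  -- length of the join of squares
  have hlenJ : ∀ n, (((List.range n).map fun i => X i ++ X i).flatten).length = 2 * K n := by
    intro n
    induction n with
    | zero => simp [hK]
    | succ n ih =>
      rw [List.range_succ, List.map_append, List.flatten_append, List.length_append, ih,
        hKs n]
      simp [List.length_append]
      omega
  have hlenJX : ∀ n, (((List.range n).map X).flatten).length = K n := by
    intro n
    induction n with
    | zero => simp [hK]
    | succ n ih =>
      rw [List.range_succ, List.map_append, List.flatten_append, List.length_append, ih,
        hKs n]
      simp
  -- F1: the n-th square block read from the word with intercept Y n
  have F1 : ∀ n m, m < 2 * (X n).length →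
      (X n ++ X n).getD m false = sturmian α (Y n) m := by
    intro n m hm
    have hJ : ((List.range (n + 1)).map fun i => X i ++ X i).flatten
        = (((List.range n).map fun i => X i ++ X i).flatten) ++ (X n ++ X n) := by
      rw [List.range_succ, List.map_append, List.flatten_append]
      simp
    have idx : 2 * K n + m <
        (((List.range (n + 1)).map fun i => X i ++ X i).flatten).length := by
      rw [hlenJ (n + 1), hKs n]; omega
    have hgot := hfact' (n + 1) (2 * K n + m) idx
    rw [hJ, List.getD_append_right _ _ _ _ (by rw [hlenJ n]; omega)] at hgot
    rw [hlenJ n, show 2 * K n + m - 2 * K n = m by omega] at hgot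
    rw [hgot, ← sturmian_shift α x (2 * K n) m]
  -- F2: square property at Y n
  have F2 : ∀ n m, m < (X n).length →
      sturmian α (Y n) m = sturmian α (Y n) (m + (X n).length) := by
    intro n m hm
    have h1' := F1 n m (by omega)
    have h2' := F1 n (m + (X n).length) (by omega)
    rw [List.getD_append _ _ _ _ hm] at h1'
    rw [List.getD_append_right _ _ _ _ (by omega),
      show m + (X n).length - (X n).length = m by omega] at h2'
    rw [← h1', ← h2']
  -- F3: minimality at Y n
  have F3 : ∀ n q', 1 ≤ q' → q' < (X n).length →
      ∃ m, m < q' ∧ sturmian α (Y n) m ≠ sturmian α (Y n) (m + q') := by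
    intro n q' hq1 hq2
    by_contra hcon
    push_neg at hcon
    set v := (X n).take q' with hv
    have hvlen : v.length = q' := by
      rw [hv, List.length_take]; omega
    have hvne : v ≠ [] := by
      intro hnil; rw [hnil] at hvlen; simp at hvlen; omega
    have heq : v ++ v = (X n ++ X n).take (2 * q') := by
      apply List.ext_getElem
      · rw [List.length_append, hvlen, List.length_take, List.length_append]; omega
      · intro i hi1 hi2
        have hi1' : i < 2 * q' := by
          rw [List.length_append, hvlen] at hi1; omega
        have hiXX : i < (X n ++ X n).length := by
          rw [List.length_append]; omega
        rw [List.getElem_take]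
        rw [← List.getD_eq_getElem (v ++ v) false hi1,
          ← List.getD_eq_getElem (X n ++ X n) false hiXX]
        have hRHS : (X n ++ X n).getD i false = sturmian α (Y n) i := F1 n i (by omega)
        rw [hRHS]
        by_cases hiq : i < q'
        · rw [List.getD_append _ _ _ _ (by omega : i < v.length)]
          have hvX : v.getD i false = (X n).getD i false := by
            rw [List.getD_eq_getElem v false (by omega),
              List.getD_eq_getElem (X n) false (by omega)]
            simp only [hv]
            exact List.getElem_take
          rw [hvX]
          have := F1 n i (by omega)
          rw [List.getD_append _ _ _ _ (by omega : i < (X n).length)] at this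
          exact this
        · rw [List.getD_append_right _ _ _ _ (by omega : v.length ≤ i), hvlen]
          have hlt : i - q' < q' := by omega
          have hvX : v.getD (i - q') false = (X n).getD (i - q') false := by
            rw [List.getD_eq_getElem v false (by omega),
              List.getD_eq_getElem (X n) false (by omega)]
            simp only [hv]
            exact List.getElem_take
          rw [hvX]
          have hF := F1 n (i - q') (by omega)
          rw [List.getD_append _ _ _ _ (by omega : i - q' < (X n).length)] at hF
          rw [hF, hcon (i - q') hlt, show i - q' + q' = i by omega]
    have hpref : (v ++ v) <+: (X n ++ X n) := heq ▸ List.take_prefix _ _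
    have hveq := hmin n v hvne hpref
    have : q' = (X n).length := by rw [← hvlen, hveq]
    omega
  -- the invariant: the ψ-image point follows the orbit
  have Inv : ∀ n, Int.fract ((x + (1 - α)) / 2 + ((K n : ℕ) : ℝ) * α)
      = (Y n + (1 - α)) / 2 := by
    intro n
    induction n with
    | zero =>
      have hK0 : K 0 = 0 := by simp [hK]
      have hY0' : Y 0 = x := by
        simp only [hYdef, hK0]
        norm_num
        exact ⟨hx0, hx1⟩
      rw [hK0, hY0']
      norm_num
      exact ⟨by linarith, by linarith⟩
    | succ n ih =>
      have hstep := psi_step h0 h1 (hY0 n) (hY1 n) (X n).length (fun m hm => F2 n m hm)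
      have hYs : Y (n + 1) = Int.fract (Y n + ((2 * (X n).length : ℕ) : ℝ) * α) := by
        simp only [hYdef]
        rw [fract_fract_add]
        congr 1
        rw [hKs n]
        push_cast
        ring
      have harg : (x + (1 - α)) / 2 + ((K (n + 1) : ℕ) : ℝ) * α
          = ((x + (1 - α)) / 2 + ((K n : ℕ) : ℝ) * α) + (((X n).length : ℕ) : ℝ) * α := by
        rw [hKs n]; push_cast; ring
      rw [harg, ← fract_fract_add, ih, hstep, ← hYs]
  -- letters within each block
  have Lblock : ∀ n m, m < (X n).length →
      sturmian α ((Y n + (1 - α)) / 2) m = sturmian α (Y n) m := by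
    intro n
    exact letters h0 h2 (hY0 n) (hY1 n) (X n).length (F3 n)
  -- final assembly
  intro n
  induction n with
  | zero => intro i hi; simp at hi
  | succ n ih =>
    intro i hi
    rw [List.range_succ, List.map_append, List.flatten_append]
    rw [List.range_succ, List.map_append, List.flatten_append, List.length_append,
      hlenJX n] at hi
    simp only [List.map_cons, List.map_nil, List.flatten_cons, List.flatten_nil,
      List.append_nil] at hi ⊢
    by_cases hiK : i < K n
    · rw [List.getD_append _ _ _ _ (by rw [hlenJX n]; exact hiK)]
      exact ih i (by rw [hlenJX n]; exact hiK)
    · push_neg at hiK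
      have him : i - K n < (X n).length := by omega
      rw [List.getD_append_right _ _ _ _ (by rw [hlenJX n]; exact hiK), hlenJX n]
      have hshift : sturmian α (psi α x) i
          = sturmian α (Int.fract (psi α x + ((K n : ℕ) : ℝ) * α)) (i - K n) := by
        rw [sturmian_shift α (psi α x) (K n) (i - K n),
          show K n + (i - K n) = i by omega]
      rw [hshift, psix, Inv n, Lblock n (i - K n) him]
      have hF := F1 n (i - K n) (by omega)
      rw [List.getD_append _ _ _ _ him] at hF
      exact hF
end

section
/- Let α = [0; a₁, a₂, …] with a₁ ≥ 2. Every Sturmian word of slope α, when written as a product of the six minimal squares of slope α, has each minimal square root among: S₁ = 0, S₂ = 01·0^{a−1}, S₃ = 01·0^a, S₄ = 1·0^a, S₅ = 10^{a+1}(10^a)^b, S₆ = 10^{a+1}(10^a)^{b+1}, where a = a₁ − 1 and b = a₂ − 1. In particular exactly six distinct minimal squares occur in L(α). -/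
/-- `S₁ = 0`. -/
def W1 : List Bool := [false]

/-- `S₂ = 010^{a−1}`. -/
def W2 (a : ℕ) : List Bool := false :: true :: List.replicate (a - 1) false

/-- `S₃ = 010^a`. -/
def W3 (a : ℕ) : List Bool := false :: true :: List.replicate a false

/-- `S₄ = 10^a`. -/
def W4 (a : ℕ) : List Bool := true :: List.replicate a false

/-- `S₅ = 10^{a+1}(10^a)^b`. -/
def W5 (a b : ℕ) : List Bool :=
  (true :: List.replicate (a + 1) false) ++ List.flatten (List.replicate b (W4 a))

/-- `S₆ = 10^{a+1}(10^a)^{b+1}`. -/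
def W6 (a b : ℕ) : List Bool :=
  (true :: List.replicate (a + 1) false) ++ List.flatten (List.replicate (b + 1) (W4 a))


namespace SixMS


/-- `w` occurs in `s` at position `k`. -/
def Occ (s : ℕ → Bool) (k : ℕ) (w : List Bool) : Prop :=
  ∀ i < w.length, w.getD i false = s (k+i)

def blk (g : ℕ) : List Bool := true :: List.replicate g false

def wordOf (gs : List ℕ) : List Bool := (gs.map blk).flatten

@[simp] lemma blk_length (g : ℕ) : (blk g).length = g + 1 := by simp [blk]

@[simp] lemma wordOf_nil : wordOf [] = [] := rfl

lemma wordOf_cons (g : ℕ) (gs : List ℕ) : wordOf (g :: gs) = blk g ++ wordOf gs := by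
  simp [wordOf]

lemma wordOf_append (l₁ l₂ : List ℕ) : wordOf (l₁ ++ l₂) = wordOf l₁ ++ wordOf l₂ := by
  simp [wordOf]

lemma wordOf_replicate_length (j g : ℕ) :
    (wordOf (List.replicate j g)).length = j * (g+1) := by
  induction j with
  | zero => simp
  | succ j ih =>
      rw [List.replicate_succ, wordOf_cons, List.length_append, ih]
      simp [Nat.succ_mul]; ring

@[simp] lemma getD_replicate_false (g i : ℕ) :
    (List.replicate g false).getD i false = false := by
  induction g generalizing i with
  | zero => simp
  | succ g ih => cases i <;> simp [List.replicate_succ, ih]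

@[simp] lemma blk_getD_zero (g : ℕ) : (blk g).getD 0 false = true := rfl

@[simp] lemma blk_getD_succ (g i : ℕ) : (blk g).getD (i+1) false = false := by
  simp [blk]

lemma Occ_append {s k u v} (hu : Occ s k u) (hv : Occ s (k + u.length) v) :
    Occ s k (u ++ v) := by
  intro i hi
  rcases lt_or_ge i u.length with h | h
  · rw [List.getD_append _ _ _ _ h]; exact hu i h
  · rw [List.getD_append_right _ _ _ _ h]
    have := hv (i - u.length) (by simp at hi; omega)
    rw [this]; congr 1; omega

lemma Occ_of_isPrefix {s k p w} (hp : p <+: w) (hw : Occ s k w) : Occ s k p := by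
  obtain ⟨t, rfl⟩ := hp
  intro i hi
  rw [← List.getD_append _ _ _ _ hi]
  exact hw i (by simp; omega)

lemma Occ_unique {s k v₁ v₂} (h1 : Occ s k v₁) (h2 : Occ s k v₂)
    (hl : v₁.length = v₂.length) : v₁ = v₂ := by
  apply List.ext_getElem hl
  intro i hi1 hi2
  have e1 := h1 i hi1
  have e2 := h2 i hi2
  rw [List.getD_eq_getElem _ _ hi1] at e1
  rw [List.getD_eq_getElem _ _ hi2] at e2
  rw [e1, e2]

lemma Occ_isPrefix {s k w v} (hw : Occ s k w) (hv : Occ s k v)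
    (hl : v.length ≤ w.length) : v <+: w := by
  have : v = w.take v.length := by
    apply List.ext_getElem (by simp [hl])
    intro i hi1 hi2
    have e1 := hv i hi1
    have e2 := hw i (lt_of_lt_of_le hi1 hl)
    rw [List.getD_eq_getElem _ _ hi1] at e1
    rw [List.getD_eq_getElem _ _ (lt_of_lt_of_le hi1 hl)] at e2
    simp [e1, e2]
  rw [this]; exact List.take_prefix _ _

lemma Occ_blk {s k g} (h1 : s k = true) (h0 : ∀ t, 1 ≤ t → t ≤ g → s (k+t) = false) :
    Occ s k (blk g) := by
  intro i hi
  simp only [blk_length] at hi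
  cases i with
  | zero => simp [blk, h1]
  | succ i =>
      rw [blk_getD_succ]
      exact (h0 (i+1) (by omega) (by omega)).symm

lemma Occ.letter {s k w} (h : Occ s k w) {i : ℕ} (hi : i < w.length) :
    s (k+i) = w.getD i false := (h i hi).symm



noncomputable def dd (α : ℝ) (a : ℕ) : ℝ := 1 - ((a:ℝ)+1)*α

/-- Numeric context derived from the continued fraction data. -/
structure Ctx (α : ℝ) (a b : ℕ) : Prop where
  h0 : 0 < α
  h2 : α < 1/2
  ha : 1 ≤ a
  hA1 : ((a:ℝ)+1) * α < 1
  hA2 : 1 < ((a:ℝ)+2) * α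
  hB1 : ((b:ℝ)+1) * dd α a < α
  hB2 : α < ((b:ℝ)+2) * dd α a

lemma Ctx.hd0 {α a b} (h : Ctx α a b) : 0 < dd α a := by
  have := h.hA1; unfold dd; linarith

lemma Ctx.hda {α a b} (h : Ctx α a b) : dd α a < α := by
  have := h.hA2; unfold dd; nlinarith [h.h0]

lemma Ctx.haa {α a b} (h : Ctx α a b) : (a:ℝ) * α < 1 - α := by
  have := h.hA1; nlinarith [h.h0]

/-- Abstract rotation-coding environment (covers both `sturmian` and `sturmian'`). -/
structure Env (α : ℝ) (s : ℕ → Bool) (f : ℕ → ℝ) : Prop where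
  nonneg : ∀ n, 0 ≤ f n
  le_one : ∀ n, f n ≤ 1
  le_of_true : ∀ n, s n = true → 1 - α ≤ f n
  le_of_false : ∀ n, s n = false → f n ≤ 1 - α
  step : ∀ n, f (n+1) = f n + α - if s n then 1 else 0

variable {α : ℝ} {a b : ℕ} {s : ℕ → Bool} {f : ℕ → ℝ}

lemma zero_run (hC : Ctx α a b) (hE : Env α s f) {n : ℕ} (hn : s n = true) :
    (∀ i, 1 ≤ i → i ≤ a → s (n+i) = false) ∧ f (n+(a+1)) = f n - dd α a := by
  have key : ∀ t, t ≤ a →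
      f (n+1+t) = f n + ((t:ℝ)+1)*α - 1 ∧ (∀ i, i < t → s (n+1+i) = false) := by
    intro t
    induction t with
    | zero =>
        intro _
        constructor
        · have h : f (n+1) = f n + α - 1 := by rw [hE.step n, hn]; simp
          simpa using h
        · intro i hi; omega
    | succ t ih =>
        intro ht
        obtain ⟨hf, hz⟩ := ih (by omega)
        have hzt : s (n+1+t) = false := by
          cases hst : s (n+1+t) with
          | false => rfl
          | true =>
              exfalso
              have h1 := hE.le_of_true _ hst
              rw [hf] at h1
              have h2 := hE.le_one n
              have hta : ((t:ℝ)+1) ≤ (a:ℝ) := by exact_mod_cast (by omega : t+1 ≤ a)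
              have h3 : ((t:ℝ)+1)*α ≤ (a:ℝ)*α :=
                mul_le_mul_of_nonneg_right hta hC.h0.le
              have := hC.haa
              linarith
        constructor
        · have hst := hE.step (n+1+t)
          rw [hzt] at hst
          simp at hst
          have hidx : n+1+(t+1) = (n+1+t)+1 := by omega
          rw [hidx, hst, hf]
          push_cast; ring
        · intro i hi
          rcases Nat.lt_or_ge i t with h | h
          · exact hz i h
          · have : i = t := by omega
            rw [this]; exact hzt
  obtain ⟨hf, hz⟩ := key a le_rfl
  constructor
  · intro i h1 h2
    have := hz (i-1) (by omega)
    rwa [show n+1+(i-1) = n+i by omega] at this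
  · rw [show n+(a+1) = n+1+a by omega, hf]
    unfold dd; ring

lemma LB (hC : Ctx α a b) (hE : Env α s f) {n : ℕ} (hn : s n = true)
    (h2 : s (n+(a+1)) = true) : 1 - α + dd α a ≤ f n := by
  have hz := (zero_run hC hE hn).2
  have := hE.le_of_true _ h2
  linarith

lemma blockC (hC : Ctx α a b) (hE : Env α s f) {n : ℕ} (hn : s n = true)
    (h2 : s (n+(a+1)) = false) :
    s (n+(a+2)) = true ∧ f (n+(a+2)) = f n + α - dd α a ∧ f n ≤ 1 - α + dd α a := by
  have hz := (zero_run hC hE hn).2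
  have hle := hE.le_of_false _ h2
  have hrec := hE.step (n+(a+1))
  rw [h2] at hrec
  simp at hrec
  rw [show n+(a+1)+1 = n+(a+2) by omega] at hrec
  have hfv : f (n+(a+2)) = f n + α - dd α a := by rw [hrec, hz]; ring
  refine ⟨?_, hfv, by linarith⟩
  cases hst : s (n+(a+2)) with
  | true => rfl
  | false =>
      exfalso
      have h3 := hE.le_of_false _ hst
      have h4 := hE.le_of_true _ hn
      have := hC.hda
      rw [hfv] at h3
      linarith

lemma LCC (hC : Ctx α a b) (hE : Env α s f) {m : ℕ} (hm : s m = true)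
    (hCg : s (m+(a+1)) = false) :
    ∃ j, (j = b ∨ j = b+1) ∧ (∀ i, i ≤ j → s (m+(a+2)+i*(a+1)) = true) ∧
      s (m+(a+2)+j*(a+1)+(a+1)) = false := by
  obtain ⟨hm', hf', hub⟩ := blockC hC hE hm hCg
  have hflow : 1 - dd α a ≤ f (m+(a+2)) := by
    have := hE.le_of_true _ hm; rw [hf']; linarith
  have hfup : f (m+(a+2)) ≤ 1 := hE.le_one _
  have chain : ∀ i, (∀ i', i' < i → s (m+(a+2)+i'*(a+1)+(a+1)) = true) →
      (∀ i', i' ≤ i → s (m+(a+2)+i'*(a+1)) = true) ∧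
      f (m+(a+2)+i*(a+1)) = f (m+(a+2)) - (i:ℝ)*(dd α a) := by
    intro i
    induction i with
    | zero =>
        intro _
        refine ⟨?_, by simp⟩
        intro i' hi'
        have : i' = 0 := by omega
        rw [this]; simpa using hm'
    | succ i ih =>
        intro h
        obtain ⟨htr, hfv⟩ := ih (fun i' hi' => h i' (by omega))
        have hcur : s (m+(a+2)+i*(a+1)) = true := htr i le_rfl
        have hnext : s (m+(a+2)+i*(a+1)+(a+1)) = true := h i (by omega)
        have hstep := (zero_run hC hE hcur).2
        constructor
        · intro i' hi'
          rcases Nat.lt_or_ge i' (i+1) with hlt | hge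
          · exact htr i' (by omega)
          · have : i' = i+1 := by omega
            rw [this, show m+(a+2)+(i+1)*(a+1) = m+(a+2)+i*(a+1)+(a+1) by ring]
            exact hnext
        · rw [show m+(a+2)+(i+1)*(a+1) = m+(a+2)+i*(a+1)+(a+1) by ring, hstep, hfv]
          push_cast; ring
  by_cases hall : ∀ i, i ≤ b+1 → s (m+(a+2)+i*(a+1)+(a+1)) = true
  · exfalso
    obtain ⟨htr, hfv⟩ := chain (b+1) (fun i' hi' => hall i' (by omega))
    have h1 := LB hC hE (htr (b+1) le_rfl) (hall (b+1) le_rfl)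
    rw [hfv] at h1
    have := hC.hB2
    have := hC.h2
    push_cast at h1
    linarith
  · push_neg at hall
    obtain ⟨i₀, hi₀le, hi₀⟩ := hall
    have hi₀f : s (m+(a+2)+i₀*(a+1)+(a+1)) = false := by
      cases h : s (m+(a+2)+i₀*(a+1)+(a+1)) with
      | false => rfl
      | true => exact absurd h hi₀
    have hex : ∃ i, s (m+(a+2)+i*(a+1)+(a+1)) = false := ⟨i₀, hi₀f⟩
    set j := Nat.find hex with hjdef
    have hj : s (m+(a+2)+j*(a+1)+(a+1)) = false := Nat.find_spec hex
    have hjle : j ≤ b+1 := le_trans (Nat.find_le hi₀f) hi₀le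
    have hmin : ∀ i', i' < j → s (m+(a+2)+i'*(a+1)+(a+1)) = true := by
      intro i' hi'
      have := Nat.find_min hex hi'
      cases h : s (m+(a+2)+i'*(a+1)+(a+1)) with
      | true => rfl
      | false => exact absurd h this
    obtain ⟨htr, hfv⟩ := chain j hmin
    have hjb : b ≤ j := by
      by_contra hjb
      push_neg at hjb
      have hcur : s (m+(a+2)+j*(a+1)) = true := htr j le_rfl
      have hstep := (zero_run hC hE hcur).2
      have hle := hE.le_of_false _ hj
      rw [hstep, hfv] at hle
      have hcast : ((j:ℝ)+2) ≤ ((b:ℝ)+1) := by exact_mod_cast (by omega : j+2 ≤ b+1)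
      have h3 : ((j:ℝ)+2) * dd α a ≤ ((b:ℝ)+1) * dd α a :=
        mul_le_mul_of_nonneg_right hcast hC.hd0.le
      have := hC.hB1
      unfold dd at *
      nlinarith
    exact ⟨j, by omega, htr, hj⟩


variable {α : ℝ} {a b : ℕ} {s : ℕ → Bool} {f : ℕ → ℝ}

lemma Occ_nil {s k} : Occ s k ([] : List Bool) := by intro i hi; simp at hi

lemma Occ_blk_dyn (hC : Ctx α a b) (hE : Env α s f) {m g : ℕ} (hm : s m = true)
    (hg : g ≤ a) : Occ s m (blk g) :=
  Occ_blk hm (fun t h1 h2 => (zero_run hC hE hm).1 t h1 (le_trans h2 hg))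

lemma OccRun (hC : Ctx α a b) (hE : Env α s f) :
    ∀ (j m : ℕ), (∀ i, i < j → s (m + i*(a+1)) = true) →
      Occ s m (wordOf (List.replicate j a)) := by
  intro j
  induction j with
  | zero => intro m _; simpa using Occ_nil
  | succ j ih =>
      intro m h
      rw [List.replicate_succ, wordOf_cons]
      apply Occ_append
      · exact Occ_blk_dyn hC hE (by simpa using h 0 (by omega)) le_rfl
      · rw [blk_length]
        apply ih
        intro i hi
        rw [show m+(a+1)+i*(a+1) = m+(i+1)*(a+1) by ring]
        exact h (i+1) (by omega)

lemma OccCB (hC : Ctx α a b) (hE : Env α s f) {m j : ℕ} (hm : s m = true)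
    (hg : s (m+(a+1)) = false) (htr : ∀ i, i < j → s (m+(a+2)+i*(a+1)) = true) :
    Occ s m (wordOf ((a+1) :: List.replicate j a)) := by
  rw [wordOf_cons]
  apply Occ_append
  · apply Occ_blk hm
    intro t h1 h2
    rcases Nat.lt_or_ge t (a+1) with h | h
    · exact (zero_run hC hE hm).1 t h1 (by omega)
    · rw [show t = a+1 by omega]; exact hg
  · rw [blk_length]
    exact OccRun hC hE j (m+(a+2)) htr

lemma runStart {j : ℕ} : ∀ i, i < j →
    (wordOf (List.replicate j a)).getD (i*(a+1)) false = true := by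
  induction j with
  | zero => intro i hi; omega
  | succ j ih =>
      intro i hi
      rw [List.replicate_succ, wordOf_cons]
      cases i with
      | zero =>
          rw [show 0*(a+1) = 0 by ring]
          rw [List.getD_append _ _ _ _ (by simp)]
          exact blk_getD_zero a
      | succ i =>
          rw [List.getD_append_right _ _ _ _ (by rw [blk_length, Nat.succ_mul]; omega)]
          rw [blk_length, show (i+1)*(a+1) - (a+1) = i*(a+1) by rw [Nat.succ_mul]; omega]
          exact ih i (by omega)

lemma splitGaps : ∀ l : List ℕ, (∀ g ∈ l, g = a ∨ g = a+1) →
    l = List.replicate l.length a ∨ ∃ j l', l = List.replicate j a ++ (a+1) :: l' := by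
  intro l
  induction l with
  | nil => intro _; left; simp
  | cons g l ih =>
      intro h
      rcases h g (by simp) with rfl | rfl
      · rcases ih (fun g' hg' => h g' (by simp [hg'])) with h1 | ⟨j, l', rfl⟩
        · left; rw [List.length_cons, List.replicate_succ]
          exact congrArg _ h1
        · right; exact ⟨j+1, l', by rw [List.replicate_succ]; simp⟩
      · right; exact ⟨0, l, by simp⟩

lemma DEC (hC : Ctx α a b) (hE : Env α s f) :
    ∀ L, 0 < L → ∀ k, s k = true → s (k+L) = true →
    ∃ gs : List ℕ, gs ≠ [] ∧ (∀ g ∈ gs, g = a ∨ g = a+1) ∧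
      (wordOf gs).length = L ∧ Occ s k (wordOf gs) := by
  intro L
  induction L using Nat.strong_induction_on with
  | _ L ih =>
  intro hL k hk hkL
  have hge : a+1 ≤ L := by
    by_contra h
    push_neg at h
    have := (zero_run hC hE hk).1 L hL (by omega)
    rw [this] at hkL
    simp at hkL
  by_cases hB : s (k+(a+1)) = true
  · rcases eq_or_lt_of_le hge with heq | hlt
    · refine ⟨[a], by simp, by simp, ?_, ?_⟩
      · simp [wordOf_cons, ← heq]
      · rw [show wordOf [a] = blk a by simp [wordOf_cons]]
        exact Occ_blk_dyn hC hE hk le_rfl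
    · obtain ⟨gs, hne, hmem, hlen, hocc⟩ :=
        ih (L-(a+1)) (by omega) (by omega) (k+(a+1)) hB
          (by rw [show k+(a+1)+(L-(a+1)) = k+L by omega]; exact hkL)
      refine ⟨a :: gs, by simp, ?_, ?_, ?_⟩
      · intro g hg
        rcases List.mem_cons.mp hg with rfl | hg
        · exact Or.inl rfl
        · exact hmem g hg
      · rw [wordOf_cons, List.length_append, hlen, blk_length]; omega
      · rw [wordOf_cons]
        exact Occ_append (Occ_blk_dyn hC hE hk le_rfl)
          (by rw [blk_length]; exact hocc)
  · have hBf : s (k+(a+1)) = false := by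
      cases h : s (k+(a+1))
      · rfl
      · exact absurd h hB
    obtain ⟨hnext, -, -⟩ := blockC hC hE hk hBf
    have hne1 : L ≠ a+1 := by
      rintro rfl
      rw [hkL] at hBf
      simp at hBf
    have hge2 : a+2 ≤ L := by omega
    have occblk : Occ s k (blk (a+1)) := by
      apply Occ_blk hk
      intro t h1 h2
      rcases Nat.lt_or_ge t (a+1) with h | h
      · exact (zero_run hC hE hk).1 t h1 (by omega)
      · rw [show t = a+1 by omega]; exact hBf
    rcases eq_or_lt_of_le hge2 with heq | hlt
    · refine ⟨[a+1], by simp, by simp, ?_, ?_⟩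
      · simp [wordOf_cons, ← heq]
      · rw [show wordOf [a+1] = blk (a+1) by simp [wordOf_cons]]
        exact occblk
    · obtain ⟨gs, hne, hmem, hlen, hocc⟩ :=
        ih (L-(a+2)) (by omega) (by omega) (k+(a+2)) hnext
          (by rw [show k+(a+2)+(L-(a+2)) = k+L by omega]; exact hkL)
      refine ⟨(a+1) :: gs, by simp, ?_, ?_, ?_⟩
      · intro g hg
        rcases List.mem_cons.mp hg with rfl | hg
        · exact Or.inr rfl
        · exact hmem g hg
      · rw [wordOf_cons, List.length_append, hlen, blk_length]; omega
      · rw [wordOf_cons]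
        exact Occ_append occblk (by rw [blk_length]; exact hocc)

lemma W2_eq (a : ℕ) : W2 a = [false] ++ blk (a-1) := rfl
lemma W3_eq (a : ℕ) : W3 a = [false] ++ blk a := rfl
lemma W4_eq (a : ℕ) : W4 a = blk a := rfl

lemma W5_eq (a b : ℕ) : W5 a b = wordOf ((a+1) :: List.replicate b a) := by
  simp [W5, wordOf, blk, W4, List.map_replicate]

lemma W6_eq (a b : ℕ) : W6 a b = wordOf ((a+1) :: List.replicate (b+1) a) := by
  simp [W6, wordOf, blk, W4, List.map_replicate]

lemma W1_len : W1.length = 1 := rfl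
lemma W2_len {a : ℕ} (ha : 1 ≤ a) : (W2 a).length = a+1 := by simp [W2]; omega
lemma W3_len (a : ℕ) : (W3 a).length = a+2 := by simp [W3]
lemma W4_len (a : ℕ) : (W4 a).length = a+1 := by simp [W4]
lemma W5_len (a b : ℕ) : (W5 a b).length = (a+2) + b*(a+1) := by
  rw [W5_eq, wordOf_cons, List.length_append, blk_length, wordOf_replicate_length]
lemma W6_len (a b : ℕ) : (W6 a b).length = (a+2) + (b+1)*(a+1) := by
  rw [W6_eq, wordOf_cons, List.length_append, blk_length, wordOf_replicate_length]

def IsSix (a b : ℕ) (v : List Bool) : Prop :=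
  v = W1 ∨ v = W2 a ∨ v = W3 a ∨ v = W4 a ∨ v = W5 a b ∨ v = W6 a b

lemma mul_lt_mul_nat {m n c : ℕ} (h : m < n) (hc : 0 < c) : m*c < n*c := by
  nlinarith

theorem master (hC : Ctx α a b) (hE : Env α s f) {k : ℕ} {u : List Bool}
    (hu : u ≠ []) (hocc : Occ s k (u ++ u)) :
    IsSix a b u ∨ ∃ v, IsSix a b v ∧ (v ++ v) <+: (u ++ u) ∧
      (v ++ v).length < (u ++ u).length := by
  have hL : 0 < u.length := List.length_pos_iff.mpr hu
  set L := u.length with hLdef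
  have hlen2 : (u ++ u).length = 2*L := by rw [List.length_append]; omega
  have hself : Occ s k u := Occ_of_isPrefix (List.prefix_append u u) hocc
  have hlet : ∀ i, i < L → s (k+i) = u.getD i false := fun i hi => (hself i hi).symm
  have hshift : ∀ i, i < L → s (k+L+i) = u.getD i false := by
    intro i hi
    have h := hocc (L+i) (by rw [hlen2]; omega)
    rw [List.getD_append_right _ _ _ _ (by omega)] at h
    rw [show L+i-u.length = i by omega] at h
    rw [show k+(L+i) = k+L+i by omega] at h
    exact h.symm
  have hkL : s (k+L) = s k := by
    have h1 := hshift 0 hL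
    have h2 := hlet 0 hL
    rw [Nat.add_zero] at h1 h2
    rw [h1, h2]
  cases hsk : s k with
  | false =>
    rcases (by omega : L = 1 ∨ 2 ≤ L) with h1 | h2
    · left; left
      apply Occ_unique hself ?_ ?_
      case _ =>
        intro i hi
        have : i = 0 := by simp [W1] at hi; omega
        subst this; simpa [W1] using hsk.symm
      case _ => rw [← hLdef, h1]; rfl
    · cases hs1 : s (k+1) with
      | false =>
          right
          have occ11 : Occ s k (W1 ++ W1) := by
            intro i hi
            simp [W1] at hi
            interval_cases i
            · simpa [W1] using hsk.symm
            · simpa [W1] using hs1.symm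
          refine ⟨W1, Or.inl rfl, Occ_isPrefix hocc occ11 ?_, ?_⟩
          · rw [hlen2]; simp [W1]; omega
          · rw [hlen2]; simp [W1]; omega
      | true =>
          have hzr := (zero_run hC hE hs1).1
          have hLge : a+1 ≤ L := by
            by_contra h
            push_neg at h
            have h1 : s (k+L+1) = true := by
              rw [hshift 1 (by omega), ← hlet 1 (by omega)]; exact hs1
            have h2 := hzr L (by omega) (by omega)
            rw [show k+1+L = k+L+1 by omega] at h2
            rw [h2] at h1; simp at h1
          have occW2 : Occ s k (W2 a) := by
            rw [W2_eq]
            apply Occ_append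
            · intro i hi
              have : i = 0 := by simpa using hi
              subst this; simpa using hsk.symm
            · simpa using Occ_blk_dyn hC hE hs1 (by omega)
          rcases eq_or_lt_of_le hLge with heq | hlt
          · left; right; left
            exact Occ_unique hself occW2 (by rw [← hLdef, ← heq, W2_len hC.ha])
          · cases hs2 : s (k+(a+2)) with
            | true =>
                right
                have occ2 : Occ s k (W2 a ++ W2 a) := by
                  apply Occ_append occW2
                  rw [W2_len hC.ha, W2_eq]
                  apply Occ_append
                  · intro i hi
                    have : i = 0 := by simpa using hi
                    subst this
                    have hz := hzr a (by have := hC.ha; omega) le_rfl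
                    rw [show k+1+a = k+(a+1) by omega] at hz
                    simpa using hz.symm
                  · have h3 := Occ_blk_dyn hC hE hs2 (show a-1 ≤ a by omega)
                    have : k+(a+1)+[false].length = k+(a+2) := by simp; omega
                    rw [this]
                    exact h3
                refine ⟨W2 a, Or.inr (Or.inl rfl), Occ_isPrefix hocc occ2 ?_, ?_⟩
                · rw [hlen2, List.length_append, W2_len hC.ha]; omega
                · rw [hlen2, List.length_append, W2_len hC.ha]; omega
            | false =>
                have hs2' : s (k+1+(a+1)) = false := by
                  rw [show k+1+(a+1) = k+(a+2) by omega]; exact hs2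
                obtain ⟨hs3, -, -⟩ := blockC hC hE hs1 hs2'
                have hs3' : s (k+(a+3)) = true := by
                  rw [show k+(a+3) = k+1+(a+2) by omega]; exact hs3
                have occW3 : Occ s k (W3 a) := by
                  rw [W3_eq]
                  apply Occ_append
                  · intro i hi
                    have : i = 0 := by simpa using hi
                    subst this; simpa using hsk.symm
                  · simpa using Occ_blk_dyn hC hE hs1 le_rfl
                rcases (by omega : L = a+2 ∨ L = a+3 ∨ a+4 ≤ L) with h|h|h
                · left; right; right; left
                  exact Occ_unique hself occW3 (by rw [← hLdef, h, W3_len])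
                · exfalso
                  have hc := hkL
                  rw [h, hsk, hs3'] at hc
                  simp at hc
                · right
                  have occ3 : Occ s k (W3 a ++ W3 a) := by
                    apply Occ_append occW3
                    rw [W3_len, W3_eq]
                    apply Occ_append
                    · intro i hi
                      have : i = 0 := by simpa using hi
                      subst this; simpa using hs2.symm
                    · have h3 := Occ_blk_dyn hC hE hs3' le_rfl
                      have : k+(a+2)+[false].length = k+(a+3) := by simp; omega
                      rw [this]
                      exact h3
                  refine ⟨W3 a, Or.inr (Or.inr (Or.inl rfl)), Occ_isPrefix hocc occ3 ?_, ?_⟩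
                  · rw [hlen2, List.length_append, W3_len]; omega
                  · rw [hlen2, List.length_append, W3_len]; omega
  | true =>
    have hzr := (zero_run hC hE hsk).1
    have hkL' : s (k+L) = true := by rw [hkL]; exact hsk
    have hLge : a+1 ≤ L := by
      by_contra h
      push_neg at h
      have := hzr L (by omega) (by omega)
      rw [this] at hkL'; simp at hkL'
    cases hs1 : s (k+(a+1)) with
    | true =>
        have occW4 : Occ s k (W4 a) := by
          rw [W4_eq]; exact Occ_blk_dyn hC hE hsk le_rfl
        rcases eq_or_lt_of_le hLge with heq | hlt
        · left; right; right; right; left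
          exact Occ_unique hself occW4 (by rw [← hLdef, ← heq, W4_len])
        · right
          have occ4 : Occ s k (W4 a ++ W4 a) := by
            apply Occ_append occW4
            rw [W4_len, W4_eq]
            exact Occ_blk_dyn hC hE hs1 le_rfl
          refine ⟨W4 a, Or.inr (Or.inr (Or.inr (Or.inl rfl))),
            Occ_isPrefix hocc occ4 ?_, ?_⟩
          · rw [hlen2, List.length_append, W4_len]; omega
          · rw [hlen2, List.length_append, W4_len]; omega
    | false =>
        have hL2 : a+2 ≤ L := by
          rcases eq_or_lt_of_le hLge with heq | hlt
          · exfalso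
            rw [← heq] at hkL'
            rw [hkL'] at hs1; simp at hs1
          · omega
        obtain ⟨gs, hne, hmem, hlen, hoccg⟩ := DEC hC hE L hL k hsk hkL'
        have hu_eq : u = wordOf gs := Occ_unique hself hoccg (by rw [hlen])
        obtain ⟨g₀, gs₁, rfl⟩ := List.exists_cons_of_ne_nil hne
        have hg₀ : g₀ = a+1 := by
          rcases hmem g₀ (by simp) with h | h
          · exfalso
            have h' := h.symm
            subst h'
            have hgs₁ : gs₁ ≠ [] := by
              rintro rfl
              rw [wordOf_cons] at hlen
              simp at hlen
              omega
            obtain ⟨g₁, gs₂, rfl⟩ := List.exists_cons_of_ne_nil hgs₁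
            have hgd : u.getD (a+1) false = true := by
              rw [hu_eq, wordOf_cons]
              rw [List.getD_append_right _ _ _ _ (by rw [blk_length])]
              rw [blk_length, Nat.sub_self, wordOf_cons]
              rw [List.getD_append _ _ _ _ (by rw [blk_length]; omega)]
              exact blk_getD_zero g₁
            have h2 := hlet (a+1) (by omega)
            rw [hgd, hs1] at h2; simp at h2
          · exact h
        subst hg₀
        obtain ⟨j₂, hj₂, hT, hF⟩ := LCC hC hE hsk hs1
        have hj₂b : b ≤ j₂ ∧ j₂ ≤ b+1 := by rcases hj₂ with h|h <;> omega
        rcases splitGaps gs₁ (fun g hg => hmem g (by simp [hg])) with hall | ⟨j, gs₂, hsplit⟩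
        · -- case (a): u = C B^j exactly
          set j := gs₁.length with hjdef
          rw [hall] at hu_eq
          rw [hall] at hlen
          rw [wordOf_cons, List.length_append, blk_length, wordOf_replicate_length] at hlen
          have hLval : L = (a+2) + j*(a+1) := hlen.symm
          have hjj : j = j₂ := by
            rcases Nat.lt_trichotomy j j₂ with hlt' | heq' | hgt'
            · exfalso
              have h1 := hT (j+1) (by omega)
              rw [show k+(a+2)+(j+1)*(a+1) = k+L+(a+1) by rw [hLval]; ring] at h1
              have h2 := hshift (a+1) (by omega)
              rw [hu_eq, wordOf_cons] at h2
              rw [List.getD_append _ _ _ _ (by rw [blk_length]; omega)] at h2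
              rw [blk_getD_succ (a+1) a] at h2
              rw [h1] at h2; simp at h2
            · exact heq'
            · exfalso
              rcases (by omega : j₂+1 < j ∨ j₂+1 = j) with hc | hc
              · have h1 := hlet ((a+2)+(j₂+1)*(a+1))
                  (by rw [hLval]
                      have := mul_lt_mul_nat hc (show 0 < a+1 by omega)
                      omega)
                rw [hu_eq, wordOf_cons] at h1
                rw [List.getD_append_right _ _ _ _ (by rw [blk_length]; omega)] at h1
                rw [blk_length, show (a+2)+(j₂+1)*(a+1) - (a+2) = (j₂+1)*(a+1) by omega] at h1
                rw [runStart (j₂+1) (by omega)] at h1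
                rw [show k+((a+2)+(j₂+1)*(a+1)) = k+(a+2)+j₂*(a+1)+(a+1) by ring] at h1
                rw [hF] at h1; simp at h1
              · have h1 := hF
                rw [show k+(a+2)+j₂*(a+1)+(a+1) = k+L by rw [hLval, ← hc]; ring] at h1
                rw [hkL'] at h1; simp at h1
          left
          rcases hj₂ with hb' | hb'
          · right; right; right; right; left
            rw [hu_eq, W5_eq, hjj, hb']
          · right; right; right; right; right
            rw [hu_eq, W6_eq, hjj, hb']
        · -- case (b): u = C B^j C ⋯
          rw [hsplit] at hu_eq
          set P := (a+2) + j*(a+1) with hPdef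
          have hu_eq2 : u = wordOf ((a+1) :: List.replicate j a) ++ wordOf ((a+1) :: gs₂) := by
            rw [hu_eq, ← wordOf_append]
            congr 1
          have hvlen : (wordOf ((a+1) :: List.replicate j a)).length = P := by
            rw [wordOf_cons, List.length_append, blk_length, wordOf_replicate_length]
          have hPL : P + (a+2) ≤ L := by
            have h3 : u.length = P + ((a+2) + (wordOf gs₂).length) := by
              rw [hu_eq2, List.length_append, hvlen, wordOf_cons, List.length_append,
                blk_length]
            rw [← hLdef] at h3
            omega
          have hsP : s (k+P) = true := by
            have h1 := hlet P (by omega)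
            rw [hu_eq2, List.getD_append_right _ _ _ _ (by rw [hvlen])] at h1
            rw [hvlen, Nat.sub_self, wordOf_cons] at h1
            rw [List.getD_append _ _ _ _ (by rw [blk_length]; omega)] at h1
            rw [blk_getD_zero] at h1
            exact h1
          have hsPa : s (k+P+(a+1)) = false := by
            have h1 := hlet (P+(a+1)) (by omega)
            rw [hu_eq2, List.getD_append_right _ _ _ _ (by rw [hvlen]; omega)] at h1
            rw [hvlen, show P+(a+1)-P = a+1 by omega, wordOf_cons] at h1
            rw [List.getD_append _ _ _ _ (by rw [blk_length]; omega)] at h1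
            rw [blk_getD_succ (a+1) a] at h1
            rw [show k+(P+(a+1)) = k+P+(a+1) by omega] at h1
            exact h1
          have hjj : j = j₂ := by
            rcases Nat.lt_trichotomy j j₂ with hlt' | heq' | hgt'
            · exfalso
              have h1 := hT (j+1) (by omega)
              rw [show k+(a+2)+(j+1)*(a+1) = k+P+(a+1) by rw [hPdef]; ring] at h1
              rw [hsPa] at h1; simp at h1
            · exact heq'
            · exfalso
              rcases (by omega : j₂+1 < j ∨ j₂+1 = j) with hc | hc
              · have hu_eq3 : u = blk (a+1) ++
                    (wordOf (List.replicate j a) ++ wordOf ((a+1) :: gs₂)) := by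
                  rw [hu_eq2, wordOf_cons, List.append_assoc]
                have hmul := mul_lt_mul_nat hc (show 0 < a+1 by omega)
                have h1 := hlet ((a+2)+(j₂+1)*(a+1)) (by omega)
                rw [hu_eq3] at h1
                rw [List.getD_append_right _ _ _ _ (by rw [blk_length]; omega)] at h1
                rw [blk_length,
                  show (a+2)+(j₂+1)*(a+1)-(a+2) = (j₂+1)*(a+1) by omega] at h1
                rw [List.getD_append _ _ _ _
                  (by rw [wordOf_replicate_length]; exact hmul)] at h1
                rw [runStart (j₂+1) (by omega)] at h1
                rw [show k+((a+2)+(j₂+1)*(a+1)) = k+(a+2)+j₂*(a+1)+(a+1) by ring] at h1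
                rw [hF] at h1; simp at h1
              · have h1 := hF
                rw [show k+(a+2)+j₂*(a+1)+(a+1) = k+P by rw [hPdef, ← hc]; ring] at h1
                rw [hsP] at h1; simp at h1
          obtain ⟨j₃, hj₃, hT₃, -⟩ := LCC hC hE hsP hsPa
          have hj₃b : b ≤ j₃ := by rcases hj₃ with h|h <;> omega
          have occv2 : Occ s (k+P) (wordOf ((a+1) :: List.replicate j a)) :=
            OccCB hC hE hsP hsPa (fun i hi => hT₃ i (by omega))
          have occv1 : Occ s k (wordOf ((a+1) :: List.replicate j a)) :=
            Occ_of_isPrefix ⟨wordOf ((a+1) :: gs₂), hu_eq2.symm⟩ hself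
          have occvv := Occ_append occv1 (by rw [hvlen]; exact occv2)
          right
          refine ⟨wordOf ((a+1) :: List.replicate j a), ?_,
            Occ_isPrefix hocc occvv ?_, ?_⟩
          · rcases hj₂ with hb' | hb'
            · right; right; right; right; left
              rw [W5_eq, hjj, hb']
            · right; right; right; right; right
              rw [W6_eq, hjj, hb']
          · rw [hlen2, List.length_append, hvlen]; omega
          · rw [hlen2, List.length_append, hvlen]; omega

noncomputable def orb (α x : ℝ) (n : ℕ) : ℝ := Int.fract (x + n*α)

noncomputable def orb' (α x : ℝ) (n : ℕ) : ℝ :=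
  if orb α x n = 0 then 1 else orb α x n

variable {x : ℝ}

lemma orb_nonneg (n : ℕ) : 0 ≤ orb α x n := Int.fract_nonneg _
lemma orb_lt_one (n : ℕ) : orb α x n < 1 := Int.fract_lt_one _

lemma orb_succ (n : ℕ) : orb α x (n+1) = Int.fract (orb α x n + α) := by
  unfold orb
  push_cast
  rw [show x + ((n:ℝ)+1)*α = (x + (n:ℝ)*α) + α by ring]
  have h : (x + (n:ℝ)*α) + α = (⌊x + (n:ℝ)*α⌋ : ℝ) + (Int.fract (x + (n:ℝ)*α) + α) := by
    rw [← add_assoc, Int.floor_add_fract]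
  rw [h, Int.fract_intCast_add]

lemma Fstep_true (hα1 : α < 1) {n : ℕ} (h : 1-α ≤ orb α x n) :
    orb α x (n+1) = orb α x n + α - 1 := by
  rw [orb_succ]
  have h1 : orb α x n < 1 := orb_lt_one n
  rw [show Int.fract (orb α x n + α) = Int.fract (orb α x n + α - 1) by
    rw [show orb α x n + α - 1 = orb α x n + α - ((1:ℤ):ℝ) by push_cast; ring,
      Int.fract_sub_intCast]]
  have hb1 : (0:ℝ) ≤ orb α x n + α - 1 := by linarith
  have hb2 : orb α x n + α - 1 < 1 := by linarith
  exact Int.fract_eq_self.mpr ⟨hb1, hb2⟩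

lemma Fstep_false (h0 : 0 ≤ α) {n : ℕ} (h : orb α x n < 1-α) :
    orb α x (n+1) = orb α x n + α := by
  rw [orb_succ]
  exact Int.fract_eq_self.mpr ⟨add_nonneg (orb_nonneg n) h0, by linarith⟩

lemma sturmian_eq_true {n : ℕ} (h : 1-α ≤ orb α x n) : sturmian α x n = true := by
  unfold sturmian; unfold orb at h
  rw [if_pos h]

lemma sturmian_eq_false {n : ℕ} (h : orb α x n < 1-α) : sturmian α x n = false := by
  unfold sturmian; unfold orb at h
  rw [if_neg (not_le.mpr h)]

lemma env_sturmian (h0 : 0 < α) (hα1 : α < 1) :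
    Env α (sturmian α x) (orb α x) := by
  constructor
  · exact orb_nonneg
  · exact fun n => (orb_lt_one n).le
  · intro n hn
    by_contra h
    rw [sturmian_eq_false (not_le.mp h)] at hn
    simp at hn
  · intro n hn
    by_contra h
    rw [sturmian_eq_true (not_le.mp h).le] at hn
    simp at hn
  · intro n
    by_cases h : 1-α ≤ orb α x n
    · rw [sturmian_eq_true h, Fstep_true hα1 h]; simp
    · rw [sturmian_eq_false (not_le.mp h), Fstep_false h0.le (not_le.mp h)]; simp

lemma sturmian'_eq_true {n : ℕ} (h : orb α x n = 0 ∨ 1-α < orb α x n) :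
    sturmian' α x n = true := by
  unfold sturmian'; unfold orb at h
  rw [if_pos h]

lemma sturmian'_eq_false {n : ℕ} (h1 : orb α x n ≠ 0) (h2 : orb α x n ≤ 1-α) :
    sturmian' α x n = false := by
  unfold sturmian'; unfold orb at h1 h2
  rw [if_neg (by push_neg; exact ⟨h1, h2⟩)]

lemma env_sturmian' (h0 : 0 < α) (hα1 : α < 1) :
    Env α (sturmian' α x) (orb' α x) := by
  constructor
  · intro n
    unfold orb'
    split
    · norm_num
    · exact orb_nonneg n
  · intro n
    unfold orb'
    split
    · norm_num
    · exact (orb_lt_one n).le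
  · intro n hn
    have hcond : orb α x n = 0 ∨ 1-α < orb α x n := by
      by_contra hc
      rw [sturmian'_eq_false (fun h => hc (Or.inl h))
        (not_lt.mp (fun h => hc (Or.inr h)))] at hn
      simp at hn
    unfold orb'
    rcases hcond with h | h
    · rw [if_pos h]; linarith
    · rw [if_neg (by intro h0'; rw [h0'] at h; linarith)]; linarith
  · intro n hn
    have hcond : orb α x n ≠ 0 ∧ orb α x n ≤ 1-α := by
      by_contra hc
      rw [Decidable.not_and_iff_or_not] at hc
      have : sturmian' α x n = true := by
        rcases hc with h | h
        · exact sturmian'_eq_true (Or.inl (not_ne_iff.mp h))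
        · exact sturmian'_eq_true (Or.inr (not_le.mp h))
      rw [this] at hn; simp at hn
    unfold orb'
    rw [if_neg hcond.1]
    exact hcond.2
  · intro n
    by_cases hF0 : orb α x n = 0
    · rw [sturmian'_eq_true (Or.inl hF0)]
      have h1 : orb α x (n+1) = α := by
        rw [orb_succ, hF0, zero_add]
        exact Int.fract_eq_self.mpr ⟨h0.le, hα1⟩
      unfold orb'
      rw [if_pos hF0, if_neg (by rw [h1]; exact ne_of_gt h0), h1]
      simp only [if_true]
      ring
    · have hFpos : 0 < orb α x n := lt_of_le_of_ne (orb_nonneg n) (Ne.symm hF0)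
      have h'n : orb' α x n = orb α x n := if_neg hF0
      by_cases hFA : 1-α < orb α x n
      · rw [sturmian'_eq_true (Or.inr hFA)]
        have h1 : orb α x (n+1) = orb α x n + α - 1 := Fstep_true hα1 hFA.le
        have h2 : orb α x (n+1) ≠ 0 := by rw [h1]; intro h; nlinarith
        unfold orb'
        rw [if_neg h2, if_neg hF0, h1]
        simp only [if_true]
      · have hle : orb α x n ≤ 1-α := not_lt.mp hFA
        rw [sturmian'_eq_false hF0 hle]
        by_cases hsum : orb α x n + α = 1
        · have h1 : orb α x (n+1) = 0 := by
            rw [orb_succ, hsum, Int.fract_one]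
          unfold orb'
          rw [if_pos h1, if_neg hF0]
          simp; linarith
        · have hlt : orb α x n < 1-α := by
            rcases lt_or_eq_of_le hle with h | h
            · exact h
            · exfalso; exact hsum (by rw [h]; ring)
          have h1 : orb α x (n+1) = orb α x n + α := Fstep_false h0.le hlt
          have h2 : orb α x (n+1) ≠ 0 := by rw [h1]; positivity
          unfold orb'
          rw [if_neg h2, if_neg hF0, h1]
          simp

noncomputable def ee (α : ℝ) (a b : ℕ) : ℝ := α - ((b:ℝ)+1)*(dd α a)

lemma Ctx.he0 {α a b} (h : Ctx α a b) : 0 < ee α a b := by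
  have := h.hB1; unfold ee; linarith

lemma Ctx.hed {α a b} (h : Ctx α a b) : ee α a b < dd α a := by
  have h1 := h.hB2
  have h2 : ((b:ℝ)+2)*dd α a = ((b:ℝ)+1)*dd α a + dd α a := by ring
  unfold ee; linarith

lemma orb_zero (hx : x ∈ Set.Ico (0:ℝ) 1) : orb α x 0 = x := by
  unfold orb
  push_cast
  rw [show x + 0*α = x by ring]
  exact Int.fract_eq_self.mpr ⟨hx.1, hx.2⟩

lemma Fblk (hC : Ctx α a b) {m g : ℕ} {z : ℝ} (hz0 : 0 ≤ z) (hz1 : z < α)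
    (hf : orb α x m = 1-α+z) (hg : g ≤ a) :
    Occ (sturmian α x) m (blk g) ∧ orb α x (m+(g+1)) = z + g*α := by
  have hα1 : α < 1 := by linarith [hC.h2]
  have haa := hC.haa
  have key : ∀ t, t ≤ g → orb α x (m+1+t) = z + t*α := by
    intro t
    induction t with
    | zero =>
        intro _
        have h := Fstep_true hα1 (le_of_eq_of_le rfl (by rw [hf]; linarith))
        rw [show m+1+0 = m+1 by omega, h, hf]
        push_cast; ring
    | succ t ih =>
        intro ht
        have hprev := ih (by omega)
        have h1 : (t:ℝ) + 1 ≤ (a:ℝ) := by exact_mod_cast (by omega : t+1 ≤ a)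
        have h2 : (t:ℝ)*α ≤ ((a:ℝ)-1)*α :=
          mul_le_mul_of_nonneg_right (by linarith) hC.h0.le
        have hlt : z + t*α < 1-α := by nlinarith [hC.h0]
        have hstep := Fstep_false hC.h0.le (by rw [hprev]; exact hlt)
        rw [show m+1+(t+1) = (m+1+t)+1 by omega, hstep, hprev]
        push_cast; ring
  constructor
  · apply Occ_blk
    · exact sturmian_eq_true (by rw [hf]; linarith)
    · intro t h1 h2
      apply sturmian_eq_false
      rw [show m+t = m+1+(t-1) by omega, key (t-1) (by omega)]
      have h3 : ((t-1:ℕ):ℝ) + 1 ≤ (a:ℝ) := by exact_mod_cast (by omega : (t-1)+1 ≤ a)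
      have h4 : ((t-1:ℕ):ℝ)*α ≤ ((a:ℝ)-1)*α :=
        mul_le_mul_of_nonneg_right (by linarith) hC.h0.le
      nlinarith [hC.h0]
  · rw [show m+(g+1) = m+1+g by omega]
    exact key g le_rfl

lemma FBfull (hC : Ctx α a b) {m : ℕ} {z : ℝ} (hz0 : dd α a ≤ z) (hz1 : z < α)
    (hf : orb α x m = 1-α+z) :
    Occ (sturmian α x) m (blk a) ∧ orb α x (m+(a+1)) = 1-α+(z - dd α a) := by
  obtain ⟨ho, he⟩ := Fblk hC (le_trans hC.hd0.le hz0) hz1 hf le_rfl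
  refine ⟨ho, ?_⟩
  rw [he]; unfold dd; ring

lemma FCblk (hC : Ctx α a b) {m : ℕ} {z : ℝ} (hz0 : 0 ≤ z) (hz1 : z < dd α a)
    (hf : orb α x m = 1-α+z) :
    Occ (sturmian α x) m (blk (a+1)) ∧ orb α x (m+(a+2)) = 1-α+(z+α-dd α a) := by
  have hzα : z < α := lt_trans hz1 hC.hda
  obtain ⟨ho, he⟩ := Fblk hC hz0 hzα hf le_rfl
  have hval : orb α x (m+(a+1)) = 1-α+(z-dd α a) := by rw [he]; unfold dd; ring
  have hlt : orb α x (m+(a+1)) < 1-α := by rw [hval]; linarith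
  have hstep := Fstep_false hC.h0.le hlt
  constructor
  · rw [show blk (a+1) = blk a ++ [false] by simp [blk, List.replicate_succ']]
    apply Occ_append ho
    intro i hi
    have : i = 0 := by simpa using hi
    subst this
    rw [show m + (blk a).length + 0 = m+(a+1) by rw [blk_length]; omega]
    simpa using (sturmian_eq_false hlt).symm
  · rw [show m+(a+2) = (m+(a+1))+1 by omega, hstep, hval]; ring

lemma FRun (hC : Ctx α a b) : ∀ (j m : ℕ) (z : ℝ), (j:ℝ)*dd α a ≤ z → z < α →
    orb α x m = 1-α+z →
    Occ (sturmian α x) m (wordOf (List.replicate j a)) ∧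
      orb α x (m+j*(a+1)) = 1-α+(z-(j:ℝ)*dd α a) := by
  intro j
  induction j with
  | zero =>
      intro m z _ _ hf
      constructor
      · simpa using (Occ_nil : Occ (sturmian α x) m [])
      · rw [show m+0*(a+1) = m by omega, hf]; push_cast; ring
  | succ j ih =>
      intro m z hz0 hz1 hf
      have hd := hC.hd0
      have hjn : (0:ℝ) ≤ (j:ℝ) := Nat.cast_nonneg j
      have hz0' : ((j:ℕ):ℝ)*dd α a ≤ z - dd α a := by push_cast at hz0 ⊢; nlinarith
      have hzd : dd α a ≤ z := by push_cast at hz0; nlinarith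
      obtain ⟨ho1, he1⟩ := FBfull hC hzd hz1 hf
      obtain ⟨ho2, he2⟩ := ih (m+(a+1)) (z - dd α a) hz0' (by linarith) he1
      constructor
      · rw [List.replicate_succ, wordOf_cons]
        exact Occ_append ho1 (by rw [blk_length]; exact ho2)
      · rw [show m+(j+1)*(a+1) = m+(a+1)+j*(a+1) by ring, he2]
        push_cast; ring

lemma Occ_false_single {m : ℕ} (h : orb α x m < 1-α) :
    Occ (sturmian α x) m [false] := by
  intro i hi
  have : i = 0 := by simpa using hi
  subst this
  simpa using (sturmian_eq_false h).symm

lemma build1 (hC : Ctx α a b) :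
    ∃ x ∈ Set.Ico (0:ℝ) 1, Occ (sturmian α x) 0 (W1 ++ W1) := by
  have h2 := hC.h2
  have h0 := hC.h0
  refine ⟨0, ⟨le_refl 0, one_pos⟩, ?_⟩
  have hf0 : orb α (0:ℝ) 0 = 0 := orb_zero ⟨le_refl 0, one_pos⟩
  have hf1 : orb α (0:ℝ) 1 = α := by
    rw [Fstep_false h0.le (by rw [hf0]; linarith), hf0]; ring
  rw [show W1 ++ W1 = [false] ++ [false] from rfl]
  apply Occ_append (Occ_false_single (by rw [hf0]; linarith))
  intro i hi
  have : i = 0 := by simpa using hi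
  subst this
  simpa using (sturmian_eq_false (n := 1) (by rw [hf1]; linarith)).symm

lemma build4 (hC : Ctx α a b) :
    ∃ x ∈ Set.Ico (0:ℝ) 1, Occ (sturmian α x) 0 (W4 a ++ W4 a) := by
  have h2 := hC.h2
  have h0 := hC.h0
  have hd := hC.hd0
  have hda := hC.hda
  set x := 1-α+dd α a with hxdef
  have hx : x ∈ Set.Ico (0:ℝ) 1 := ⟨by rw [hxdef]; linarith, by rw [hxdef]; linarith⟩
  have hf0 : orb α x 0 = 1-α+dd α a := orb_zero hx
  obtain ⟨ho1, he1⟩ := FBfull hC le_rfl hda hf0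
  have he1' : orb α x (0+(a+1)) = 1-α+0 := by rw [he1]; ring
  obtain ⟨ho2, -⟩ := Fblk hC le_rfl h0 he1' le_rfl
  refine ⟨x, hx, ?_⟩
  rw [show W4 a ++ W4 a = blk a ++ blk a by rw [W4_eq]]
  exact Occ_append ho1 (by rw [blk_length]; exact ho2)

lemma W2_sq (ha : 1 ≤ a) : W2 a ++ W2 a = ([false] ++ blk a) ++ blk (a-1) := by
  obtain ⟨c, rfl⟩ : ∃ c, a = c+1 := ⟨a-1, by omega⟩
  simp [W2, blk, List.replicate_succ']

lemma W3_sq : W3 a ++ W3 a = ([false] ++ blk (a+1)) ++ blk a := by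
  simp [W3, blk, List.replicate_succ']

lemma build2 (hC : Ctx α a b) :
    ∃ x ∈ Set.Ico (0:ℝ) 1, Occ (sturmian α x) 0 (W2 a ++ W2 a) := by
  have h2 := hC.h2
  have h0 := hC.h0
  have hd := hC.hd0
  have hda := hC.hda
  set x := 1-2*α+dd α a with hxdef
  have hx : x ∈ Set.Ico (0:ℝ) 1 := ⟨by rw [hxdef]; linarith, by rw [hxdef]; linarith⟩
  have hf0 : orb α x 0 = 1-2*α+dd α a := orb_zero hx
  have hf0' : orb α x 0 < 1-α := by rw [hf0]; linarith
  have hf1 : orb α x 1 = 1-α+dd α a := by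
    rw [Fstep_false h0.le hf0', hf0]; ring
  obtain ⟨ho1, he1⟩ := FBfull hC le_rfl hda hf1
  have he1' : orb α x (1+(a+1)) = 1-α+0 := by rw [he1]; ring
  obtain ⟨ho2, -⟩ := Fblk hC le_rfl h0 he1' (by omega : a-1 ≤ a)
  refine ⟨x, hx, ?_⟩
  rw [W2_sq hC.ha]
  apply Occ_append
  · exact Occ_append (Occ_false_single hf0') (by simpa using ho1)
  · rw [show (0:ℕ) + ([false] ++ blk a).length = 1+(a+1) by simp [blk_length]; omega]
    exact ho2

lemma build3 (hC : Ctx α a b) :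
    ∃ x ∈ Set.Ico (0:ℝ) 1, Occ (sturmian α x) 0 (W3 a ++ W3 a) := by
  have h2 := hC.h2
  have h0 := hC.h0
  have hd := hC.hd0
  have hda := hC.hda
  set x := 1-2*α+dd α a/2 with hxdef
  have hx : x ∈ Set.Ico (0:ℝ) 1 := ⟨by rw [hxdef]; linarith, by rw [hxdef]; linarith⟩
  have hf0 : orb α x 0 = 1-2*α+dd α a/2 := orb_zero hx
  have hf0' : orb α x 0 < 1-α := by rw [hf0]; linarith
  have hf1 : orb α x 1 = 1-α+dd α a/2 := by
    rw [Fstep_false h0.le hf0', hf0]; ring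
  obtain ⟨ho1, he1⟩ := FCblk hC (by linarith) (by linarith) hf1
  have he1' : orb α x (1+(a+2)) = 1-α+(α-dd α a/2) := by rw [he1]; ring
  obtain ⟨ho2, -⟩ := Fblk hC (by linarith) (by linarith) he1' le_rfl
  refine ⟨x, hx, ?_⟩
  rw [W3_sq]
  apply Occ_append
  · exact Occ_append (Occ_false_single hf0') (by simpa using ho1)
  · rw [show (0:ℕ) + ([false] ++ blk (a+1)).length = 1+(a+2) by simp [blk_length]; omega]
    exact ho2

lemma build5 (hC : Ctx α a b) :
    ∃ x ∈ Set.Ico (0:ℝ) 1, Occ (sturmian α x) 0 (W5 a b ++ W5 a b) := by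
  have h2 := hC.h2
  have h0 := hC.h0
  have hd := hC.hd0
  have hda := hC.hda
  have he0 := hC.he0
  have hed := hC.hed
  have hbn : (0:ℝ) ≤ (b:ℝ) := Nat.cast_nonneg b
  have had : α - dd α a = (b:ℝ)*dd α a + ee α a b := by unfold ee; ring
  set z₀ := (dd α a - ee α a b)/2 with hz₀def
  set x := 1-α+z₀ with hxdef
  have hx : x ∈ Set.Ico (0:ℝ) 1 :=
    ⟨by rw [hxdef, hz₀def]; linarith, by rw [hxdef, hz₀def]; linarith⟩
  have hf0 : orb α x 0 = 1-α+z₀ := orb_zero hx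
  have hα_eq : α = (b:ℝ)*dd α a + ee α a b + dd α a := by unfold ee; ring
  have hz₀0 : 0 ≤ z₀ := by rw [hz₀def]; linarith
  have hz₀d : z₀ + ee α a b < dd α a := by rw [hz₀def]; linarith
  obtain ⟨hoC1, heC1⟩ := FCblk hC hz₀0 (by linarith) hf0
  have heC1' : orb α x (a+2) = 1-α+((b:ℝ)*dd α a + (z₀ + ee α a b)) := by
    rw [show (a+2 : ℕ) = 0+(a+2) by omega, heC1]; unfold ee; ring
  obtain ⟨hoR1, heR1⟩ := FRun hC b (a+2) _
    (by linarith) (by linarith) heC1'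
  have heR1' : orb α x ((a+2)+b*(a+1)) = 1-α+(z₀ + ee α a b) := by
    rw [heR1]; ring
  obtain ⟨hoC2, heC2⟩ := FCblk hC (by linarith) hz₀d heR1'
  have heC2' : orb α x ((a+2)+b*(a+1)+(a+2)) = 1-α+((b:ℝ)*dd α a + (z₀ + 2*ee α a b)) := by
    rw [heC2]; unfold ee; ring
  obtain ⟨hoR2, -⟩ := FRun hC b ((a+2)+b*(a+1)+(a+2)) _
    (by linarith) (by linarith) heC2'
  refine ⟨x, hx, ?_⟩
  rw [W5_eq, wordOf_cons]
  apply Occ_append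
  · apply Occ_append hoC1
    rw [blk_length, Nat.zero_add]
    exact hoR1
  · rw [Nat.zero_add, List.length_append, blk_length, wordOf_replicate_length]
    apply Occ_append hoC2
    rw [blk_length]
    exact hoR2

lemma wordOf_repsucc (j : ℕ) :
    wordOf (List.replicate (j+1) a) = wordOf (List.replicate j a) ++ blk a := by
  rw [List.replicate_succ', wordOf_append]
  simp [wordOf_cons]

lemma build6 (hC : Ctx α a b) :
    ∃ x ∈ Set.Ico (0:ℝ) 1, Occ (sturmian α x) 0 (W6 a b ++ W6 a b) := by
  have h2 := hC.h2
  have h0 := hC.h0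
  have hd := hC.hd0
  have hda := hC.hda
  have he0 := hC.he0
  have hed := hC.hed
  have hbn : (0:ℝ) ≤ (b:ℝ) := Nat.cast_nonneg b
  have hbd : (0:ℝ) ≤ (b:ℝ)*dd α a := by positivity
  have hα_eq : α = (b:ℝ)*dd α a + ee α a b + dd α a := by unfold ee; ring
  set z₀ := dd α a - ee α a b/2 with hz₀def
  set x := 1-α+z₀ with hxdef
  have hz₀0 : 0 ≤ z₀ := by rw [hz₀def]; linarith
  have hz₀d : z₀ < dd α a := by rw [hz₀def]; linarith
  have hx : x ∈ Set.Ico (0:ℝ) 1 :=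
    ⟨by rw [hxdef]; linarith, by rw [hxdef]; linarith⟩
  have hf0 : orb α x 0 = 1-α+z₀ := orb_zero hx
  obtain ⟨hoC1, heC1⟩ := FCblk hC hz₀0 hz₀d hf0
  have heC1' : orb α x (a+2) = 1-α+((((b:ℕ)+1:ℕ):ℝ)*dd α a + ee α a b/2) := by
    rw [show (a+2 : ℕ) = 0+(a+2) by omega, heC1, hz₀def]
    push_cast
    unfold ee
    ring
  obtain ⟨hoR1, heR1⟩ := FRun hC (b+1) (a+2) _
    (by push_cast; linarith) (by push_cast; linarith) heC1'
  have heR1' : orb α x ((a+2)+(b+1)*(a+1)) = 1-α+(ee α a b/2) := by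
    rw [heR1]; push_cast; ring
  obtain ⟨hoC2, heC2⟩ := FCblk hC (by linarith) (by linarith) heR1'
  have heC2' : orb α x ((a+2)+(b+1)*(a+1)+(a+2))
      = 1-α+((b:ℝ)*dd α a + 3*ee α a b/2) := by
    rw [heC2]; unfold ee; ring
  obtain ⟨hoR2, heR2⟩ := FRun hC b ((a+2)+(b+1)*(a+1)+(a+2)) _
    (by linarith) (by linarith) heC2'
  have heR2' : orb α x ((a+2)+(b+1)*(a+1)+(a+2)+b*(a+1)) = 1-α+(3*ee α a b/2) := by
    rw [heR2]; ring
  obtain ⟨ho3, -⟩ := Fblk hC (by linarith) (by linarith) heR2' le_rfl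
  refine ⟨x, hx, ?_⟩
  rw [W6_eq, wordOf_cons]
  apply Occ_append
  · apply Occ_append hoC1
    rw [blk_length, Nat.zero_add]
    exact hoR1
  · rw [Nat.zero_add, List.length_append, blk_length, wordOf_replicate_length]
    apply Occ_append hoC2
    rw [blk_length, wordOf_repsucc]
    exact Occ_append hoR2 (by rw [wordOf_replicate_length]; exact ho3)

lemma mkCtx (hα : Irrational α) (h0 : 0 < α) (h2 : α < 1/2)
    (hA : (a : ℤ) = cfA α 1 - 1) (hB : (b : ℤ) = cfA α 2 - 1) : Ctx α a b := by
  have hα1 : α < 1 := by linarith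
  have hαne : α ≠ 0 := ne_of_gt h0
  have hfr : Int.fract α = α := Int.fract_eq_self.mpr ⟨h0.le, hα1⟩
  have e0 : cfX α 0 = α := rfl
  have e1 : cfX α 1 = α⁻¹ := by
    show (Int.fract (cfX α 0))⁻¹ = α⁻¹
    rw [e0, hfr]
  have hfloor1 : ⌊α⁻¹⌋ = (a:ℤ)+1 := by
    unfold cfA at hA
    rw [e1] at hA
    omega
  have h1 : ((a:ℝ)+1) ≤ α⁻¹ := by
    have h := Int.floor_le (α⁻¹)
    rw [hfloor1] at h
    push_cast at h
    exact h
  have h2' : α⁻¹ < (a:ℝ)+2 := by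
    have h := Int.lt_floor_add_one (α⁻¹)
    rw [hfloor1] at h
    push_cast at h
    linarith
  have hA1 : ((a:ℝ)+1) * α < 1 := by
    have hle : ((a:ℝ)+1) * α ≤ 1 := by
      have := mul_le_mul_of_nonneg_right h1 h0.le
      rwa [inv_mul_cancel₀ hαne] at this
    rcases lt_or_eq_of_le hle with h | h
    · exact h
    · exfalso
      apply hα
      refine ⟨1/((a:ℚ)+1), ?_⟩
      have hane : ((a:ℝ)+1) ≠ 0 := by positivity
      push_cast
      rw [eq_comm, eq_div_iff hane, mul_comm]
      exact h
  have hA2 : 1 < ((a:ℝ)+2) * α := by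
    have := mul_lt_mul_of_pos_right h2' h0
    rwa [inv_mul_cancel₀ hαne] at this
  have ha1 : 1 ≤ a := by
    by_contra h
    have : a = 0 := by omega
    subst this
    norm_num at hA2
    linarith
  have hd0 : (0:ℝ) < 1 - ((a:ℝ)+1)*α := by linarith
  have hfr1 : Int.fract (α⁻¹) = α⁻¹ - ((a:ℝ)+1) := by
    rw [Int.fract, hfloor1]
    push_cast
    ring
  have e2 : cfX α 2 = (α⁻¹ - ((a:ℝ)+1))⁻¹ := by
    show (Int.fract (cfX α 1))⁻¹ = _
    rw [e1, hfr1]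
  have hquot : α⁻¹ - ((a:ℝ)+1) = (1 - ((a:ℝ)+1)*α)/α := by
    field_simp
  have hinv : (α⁻¹ - ((a:ℝ)+1))⁻¹ = α/(1 - ((a:ℝ)+1)*α) := by
    rw [hquot, inv_div]
  have hfloor2 : ⌊α/(1 - ((a:ℝ)+1)*α)⌋ = (b:ℤ)+1 := by
    unfold cfA at hB
    rw [e2, hinv] at hB
    omega
  have hb1 : ((b:ℝ)+1) ≤ α/(1 - ((a:ℝ)+1)*α) := by
    have h := Int.floor_le (α/(1 - ((a:ℝ)+1)*α))
    rw [hfloor2] at h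
    push_cast at h
    exact h
  have hb2 : α/(1 - ((a:ℝ)+1)*α) < (b:ℝ)+2 := by
    have h := Int.lt_floor_add_one (α/(1 - ((a:ℝ)+1)*α))
    rw [hfloor2] at h
    push_cast at h
    linarith
  have hB1 : ((b:ℝ)+1) * (1 - ((a:ℝ)+1)*α) < α := by
    have hle : ((b:ℝ)+1) * (1 - ((a:ℝ)+1)*α) ≤ α := by
      have := mul_le_mul_of_nonneg_right hb1 hd0.le
      rwa [div_mul_cancel₀ _ (ne_of_gt hd0)] at this
    rcases lt_or_eq_of_le hle with h | h
    · exact h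
    · exfalso
      apply hα
      refine ⟨((b:ℚ)+1)/(1+((b:ℚ)+1)*((a:ℚ)+1)), ?_⟩
      have hden : (0:ℝ) < 1+((b:ℝ)+1)*((a:ℝ)+1) := by positivity
      push_cast
      rw [eq_comm, eq_div_iff (ne_of_gt hden)]
      linear_combination -h
  have hB2 : α < ((b:ℝ)+2) * (1 - ((a:ℝ)+1)*α) := by
    have := mul_lt_mul_of_pos_right hb2 hd0
    rwa [div_mul_cancel₀ _ (ne_of_gt hd0)] at this
  exact ⟨h0, h2, ha1, hA1, hA2, hB1, hB2⟩

lemma sq_getD {p : List Bool} (i : ℕ) (h : i < p.length) :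
    (p++p).getD i false = p.getD i false := List.getD_append _ _ _ _ h

lemma sq_getD_right {p : List Bool} (i : ℕ) :
    (p++p).getD (p.length + i) false = p.getD i false := by
  rw [List.getD_append_right _ _ _ _ (by omega)]
  congr 1
  omega

lemma len_kill {p q : List Bool} (h : (p++p) <+: (q++q)) (hl : q.length < p.length) :
    False := by
  have := h.length_le
  simp [List.length_append] at this
  omega

lemma letter_kill {p q : List Bool} (h : (p++p) <+: (q++q)) {i : ℕ}
    (hi : i < p.length + p.length)
    (hne : (p++p).getD i false ≠ (q++q).getD i false) : False := by
  obtain ⟨t, ht⟩ := h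
  apply hne
  conv_rhs => rw [← ht]
  exact (List.getD_append _ _ _ _ (by simpa using hi)).symm

lemma W5_getDa1 (a b : ℕ) : (W5 a b).getD (a+1) false = false := by
  rw [W5_eq, wordOf_cons, List.getD_append _ _ _ _ (by rw [blk_length]; omega),
    blk_getD_succ]

lemma W6_getDa1 (a b : ℕ) : (W6 a b).getD (a+1) false = false := by
  rw [W6_eq, wordOf_cons, List.getD_append _ _ _ _ (by rw [blk_length]; omega),
    blk_getD_succ]

lemma W6_getD0 (a b : ℕ) : (W6 a b).getD 0 false = true := rfl
lemma W5_getD0 (a b : ℕ) : (W5 a b).getD 0 false = true := rfl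
lemma W4_getD0 (a : ℕ) : (W4 a).getD 0 false = true := rfl
lemma W3_getD0 (a : ℕ) : (W3 a).getD 0 false = false := rfl
lemma W3_getD1 (a : ℕ) : (W3 a).getD 1 false = true := rfl
lemma W2_getD0 (a : ℕ) : (W2 a).getD 0 false = false := rfl
lemma W2_getD1 (a : ℕ) : (W2 a).getD 1 false = true := rfl
lemma W1_getD0 : W1.getD 0 false = false := rfl

lemma six_sq_prefix (hC : Ctx α a b) {p q : List Bool} (hp : IsSix a b p)
    (hq : IsSix a b q) (h : (p++p) <+: (q++q)) : p ++ p = q ++ q := by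
  have ha := hC.ha
  have l1 : W1.length = 1 := rfl
  have l2 := W2_len ha
  have l3 := W3_len a
  have l4 := W4_len a
  have l5ge : a+2 ≤ (W5 a b).length := by rw [W5_len]; exact Nat.le_add_right _ _
  have l65 : (W6 a b).length = (W5 a b).length + (a+1) := by rw [W5_len, W6_len]; ring
  rcases hp with rfl|rfl|rfl|rfl|rfl|rfl <;> rcases hq with rfl|rfl|rfl|rfl|rfl|rfl
  -- p = W1
  · rfl
  · exact absurd (letter_kill h (i := 1) (by omega)
      (by rw [show (W1++W1).getD 1 false = false from rfl,
        sq_getD 1 (by omega), W2_getD1]; simp)) not_false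
  · exact absurd (letter_kill h (i := 1) (by omega)
      (by rw [show (W1++W1).getD 1 false = false from rfl,
        sq_getD 1 (by omega), W3_getD1]; simp)) not_false
  · exact absurd (letter_kill h (i := 0) (by omega)
      (by rw [show (W1++W1).getD 0 false = false from rfl,
        sq_getD 0 (by omega), W4_getD0]; simp)) not_false
  · exact absurd (letter_kill h (i := 0) (by omega)
      (by rw [show (W1++W1).getD 0 false = false from rfl,
        sq_getD 0 (by omega), W5_getD0]; simp)) not_false
  · exact absurd (letter_kill h (i := 0) (by omega)
      (by rw [show (W1++W1).getD 0 false = false from rfl,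
        sq_getD 0 (by omega), W6_getD0]; simp)) not_false
  -- p = W2
  · exact absurd (len_kill h (by omega)) not_false
  · rfl
  · exact absurd (letter_kill h (i := a+2) (by omega)
      (by rw [show a+2 = (W2 a).length + 1 by omega, sq_getD_right, W2_getD1,
        show (W2 a).length + 1 = (W3 a).length + 0 by omega, sq_getD_right, W3_getD0]
          ; simp)) not_false
  · exact absurd (letter_kill h (i := 0) (by omega)
      (by rw [sq_getD 0 (by omega), W2_getD0, sq_getD 0 (by omega), W4_getD0]
          ; simp)) not_false
  · exact absurd (letter_kill h (i := 0) (by omega)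
      (by rw [sq_getD 0 (by omega), W2_getD0, sq_getD 0 (by omega), W5_getD0]
          ; simp)) not_false
  · exact absurd (letter_kill h (i := 0) (by omega)
      (by rw [sq_getD 0 (by omega), W2_getD0, sq_getD 0 (by omega), W6_getD0]
          ; simp)) not_false
  -- p = W3
  · exact absurd (len_kill h (by omega)) not_false
  · exact absurd (len_kill h (by omega)) not_false
  · rfl
  · exact absurd (len_kill h (by omega)) not_false
  · exact absurd (letter_kill h (i := 0) (by omega)
      (by rw [sq_getD 0 (by omega), W3_getD0, sq_getD 0 (by omega), W5_getD0]
          ; simp)) not_false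
  · exact absurd (letter_kill h (i := 0) (by omega)
      (by rw [sq_getD 0 (by omega), W3_getD0, sq_getD 0 (by omega), W6_getD0]
          ; simp)) not_false
  -- p = W4
  · exact absurd (len_kill h (by omega)) not_false
  · exact absurd (letter_kill h (i := 0) (by omega)
      (by rw [sq_getD 0 (by omega), W4_getD0, sq_getD 0 (by omega), W2_getD0]
          ; simp)) not_false
  · exact absurd (letter_kill h (i := 0) (by omega)
      (by rw [sq_getD 0 (by omega), W4_getD0, sq_getD 0 (by omega), W3_getD0]
          ; simp)) not_false
  · rfl
  · exact absurd (letter_kill h (i := a+1) (by omega)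
      (by rw [show a+1 = (W4 a).length + 0 by omega, sq_getD_right, W4_getD0,
        show (W4 a).length + 0 = a+1 by omega, sq_getD (a+1) (by omega), W5_getDa1]
          ; simp)) not_false
  · exact absurd (letter_kill h (i := a+1) (by omega)
      (by rw [show a+1 = (W4 a).length + 0 by omega, sq_getD_right, W4_getD0,
        show (W4 a).length + 0 = a+1 by omega, sq_getD (a+1) (by omega), W6_getDa1]
          ; simp)) not_false
  -- p = W5
  · exact absurd (len_kill h (by omega)) not_false
  · exact absurd (len_kill h (by omega)) not_false
  · exact absurd (letter_kill h (i := 0) (by omega)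
      (by rw [sq_getD 0 (by omega), W5_getD0, sq_getD 0 (by omega), W3_getD0]
          ; simp)) not_false
  · exact absurd (len_kill h (by omega)) not_false
  · rfl
  · exact absurd (letter_kill h (i := (W5 a b).length + (a+1)) (by omega)
      (by rw [sq_getD_right, W5_getDa1,
        show (W5 a b).length + (a+1) = (W6 a b).length + 0 by omega,
        sq_getD_right, W6_getD0]
          ; simp)) not_false
  -- p = W6
  · exact absurd (len_kill h (by omega)) not_false
  · exact absurd (len_kill h (by omega)) not_false
  · exact absurd (len_kill h (by omega)) not_false
  · exact absurd (len_kill h (by omega)) not_false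
  · exact absurd (len_kill h (by omega)) not_false
  · rfl

lemma six_ne_nil (hC : Ctx α a b) {v : List Bool} (hv : IsSix a b v) : v ≠ [] := by
  have ha := hC.ha
  rcases hv with rfl|rfl|rfl|rfl|rfl|rfl
  · simp [W1]
  · simp [W2]
  · simp [W3]
  · simp [W4]
  · apply List.length_pos_iff.mp
    rw [W5_len]; omega
  · apply List.length_pos_iff.mp
    rw [W6_len]; omega

lemma six_min (hC : Ctx α a b) {x : ℝ} {k : ℕ} {p : List Bool} (hp : IsSix a b p)
    (hocc : Occ (sturmian α x) k (p++p)) :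
    ∀ v : List Bool, v ≠ [] → (v++v) <+: (p++p) → v ++ v = p ++ p := by
  intro v hv hpre
  have hE : Env α (sturmian α x) (orb α x) :=
    env_sturmian hC.h0 (by linarith [hC.h2])
  have hoccv : Occ (sturmian α x) k (v++v) := Occ_of_isPrefix hpre hocc
  rcases master hC hE hv hoccv with hsixv | ⟨v', hv', hpre', hlt'⟩
  · exact six_sq_prefix hC hsixv hp hpre
  · exfalso
    have heq := six_sq_prefix hC hv' hp (hpre'.trans hpre)
    have hle := hpre.length_le
    have := congrArg List.length heq
    omega

end SixMS

open SixMS in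
/-- for `α = [0; a₁, a₂, …]` with `a₁ ≥ 2`, set `a = a₁ − 1` and
`b = a₂ − 1`. Every Sturmian word of slope `α`, written as a product of minimal
squares `X₁²X₂²⋯`, has each minimal square root `X_n` among
`S₁ = 0`, `S₂ = 010^{a−1}`, `S₃ = 010^a`, `S₄ = 10^a`, `S₅ = 10^{a+1}(10^a)^b`,
`S₆ = 10^{a+1}(10^a)^{b+1}`; in particular, exactly these six pairwise distinct
minimal squares occur in `L(α)`. -/
theorem six_minimal_squares (α : ℝ) (hα : Irrational α) (h0 : 0 < α) (h2 : α < 1 / 2)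
    (a b : ℕ) (ha : (a : ℤ) = cfA α 1 - 1) (hb : (b : ℤ) = cfA α 2 - 1) :
    (∀ x ∈ Set.Ico (0 : ℝ) 1, ∀ s : ℕ → Bool,
      (s = sturmian α x ∨ s = sturmian' α x) →
      ∀ X : ℕ → List Bool, (∀ n, X n ≠ []) →
      (∀ n, ∀ v : List Bool, v ≠ [] → (v ++ v) <+: (X n ++ X n) → v = X n) →
      (∀ n, IsPref (List.flatten ((List.range n).map fun i => X i ++ X i)) s) →
      ∀ n, X n ∈ ({W1, W2 a, W3 a, W4 a, W5 a b, W6 a b} : Set (List Bool))) ∧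
    {w : List Bool | inLang α w ∧ (∃ u : List Bool, u ≠ [] ∧ w = u ++ u) ∧
        (∀ v : List Bool, v ≠ [] → (v ++ v) <+: w → v ++ v = w)} =
      ({W1 ++ W1, W2 a ++ W2 a, W3 a ++ W3 a, W4 a ++ W4 a,
        W5 a b ++ W5 a b, W6 a b ++ W6 a b} : Set (List Bool)) ∧
    List.Nodup [W1 ++ W1, W2 a ++ W2 a, W3 a ++ W3 a, W4 a ++ W4 a,
        W5 a b ++ W5 a b, W6 a b ++ W6 a b] := by
  have hC : Ctx α a b := mkCtx hα h0 h2 ha hb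
  have hα1 : α < 1 := by linarith
  refine ⟨?_, ?_, ?_⟩
  · -- part 1
    intro x hx s hs X hXne hXmin hpref n
    obtain ⟨f, hE⟩ : ∃ f, Env α s f := by
      rcases hs with rfl | rfl
      · exact ⟨orb α x, env_sturmian hC.h0 hα1⟩
      · exact ⟨orb' α x, env_sturmian' hC.h0 hα1⟩
    have hp := hpref (n+1)
    rw [List.range_succ, List.map_append] at hp
    simp only [List.map_cons, List.map_nil, List.flatten_append, List.flatten_cons,
      List.flatten_nil, List.append_nil] at hp
    have hgen : ∀ (B : List Bool), IsPref (B ++ (X n ++ X n)) s →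
        Occ s B.length (X n ++ X n) := by
      intro B hB i hi
      have h2' := hB (B.length + i) (by rw [List.length_append]; omega)
      rw [List.getD_append_right _ _ _ _ (by omega)] at h2'
      rw [show B.length + i - B.length = i by omega] at h2'
      exact h2'
    have hocc := hgen _ hp
    rcases master hC hE (hXne n) hocc with h6 | ⟨v, hv6, hpre, hlt⟩
    · rcases h6 with h|h|h|h|h|h <;> rw [h] <;> simp
    · exfalso
      have hveq := hXmin n v (six_ne_nil hC hv6) hpre
      rw [hveq] at hlt
      exact lt_irrefl _ hlt
  · -- part 2
    ext w
    simp only [Set.mem_setOf_eq, Set.mem_insert_iff, Set.mem_singleton_iff]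
    constructor
    · rintro ⟨⟨x, hx, k, hcond⟩, ⟨u, hune, rfl⟩, hwmin⟩
      have hE := env_sturmian (x := x) hC.h0 hα1
      have hocc : Occ (sturmian α x) k (u++u) := hcond
      rcases master hC hE hune hocc with h6 | ⟨v, hv6, hpre, hlt⟩
      · rcases h6 with rfl|rfl|rfl|rfl|rfl|rfl
        · exact Or.inl rfl
        · exact Or.inr (Or.inl rfl)
        · exact Or.inr (Or.inr (Or.inl rfl))
        · exact Or.inr (Or.inr (Or.inr (Or.inl rfl)))
        · exact Or.inr (Or.inr (Or.inr (Or.inr (Or.inl rfl))))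
        · exact Or.inr (Or.inr (Or.inr (Or.inr (Or.inr rfl))))
      · exfalso
        have hveq := hwmin v (six_ne_nil hC hv6) hpre
        rw [hveq] at hlt
        exact lt_irrefl _ hlt
    · intro hw
      have key : ∀ p : List Bool, IsSix a b p → w = p ++ p →
          inLang α w ∧ (∃ u, u ≠ [] ∧ w = u ++ u) ∧
          (∀ v, v ≠ [] → (v++v) <+: w → v++v = w) := by
        rintro p hp rfl
        obtain ⟨x, hx, hocc⟩ : ∃ x ∈ Set.Ico (0:ℝ) 1, Occ (sturmian α x) 0 (p++p) := by
          rcases hp with rfl|rfl|rfl|rfl|rfl|rfl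
          · exact build1 hC
          · exact build2 hC
          · exact build3 hC
          · exact build4 hC
          · exact build5 hC
          · exact build6 hC
        exact ⟨⟨x, hx, 0, hocc⟩, ⟨p, six_ne_nil hC hp, rfl⟩, six_min hC hp hocc⟩
      rcases hw with h|h|h|h|h|h
      · exact key _ (Or.inl rfl) h
      · exact key _ (Or.inr (Or.inl rfl)) h
      · exact key _ (Or.inr (Or.inr (Or.inl rfl))) h
      · exact key _ (Or.inr (Or.inr (Or.inr (Or.inl rfl)))) h
      · exact key _ (Or.inr (Or.inr (Or.inr (Or.inr (Or.inl rfl))))) h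
      · exact key _ (Or.inr (Or.inr (Or.inr (Or.inr (Or.inr rfl))))) h
  · -- part 3
    have ha1 := hC.ha
    have l1 : W1.length = 1 := rfl
    have l2 := W2_len hC.ha
    have l3 := W3_len a
    have l4 := W4_len a
    have l5ge : a+2 ≤ (W5 a b).length := by rw [W5_len]; exact Nat.le_add_right _ _
    have l65 : (W6 a b).length = (W5 a b).length + (a+1) := by
      rw [W5_len, W6_len]; ring
    have lenne : ∀ p q : List Bool, p.length ≠ q.length → ¬(p ++ p = q ++ q) := by
      intro p q hpq h
      apply hpq
      have := congrArg List.length h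
      simp only [List.length_append] at this
      omega
    have ne24 : ¬(W2 a ++ W2 a = W4 a ++ W4 a) := by
      intro h
      have h0' := congrArg (fun l => l.getD 0 false) h
      rw [sq_getD 0 (by omega), W2_getD0, sq_getD 0 (by omega), W4_getD0] at h0'
      simp at h0'
    have ne35 : ¬(W3 a ++ W3 a = W5 a b ++ W5 a b) := by
      intro h
      have h0' := congrArg (fun l => l.getD 0 false) h
      rw [sq_getD 0 (by omega), W3_getD0, sq_getD 0 (by omega), W5_getD0] at h0'
      simp at h0'
    simp only [List.nodup_cons, List.mem_cons, List.not_mem_nil, or_false,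
      List.nodup_nil, and_true, not_or, List.mem_singleton]
    
    refine ⟨⟨?_, ?_, ?_, ?_, ?_⟩, ⟨?_, ?_, ?_, ?_⟩, ⟨?_, ?_, ?_⟩, ⟨?_, ?_⟩, ?_, not_false⟩
    · exact lenne _ _ (by omega)
    · exact lenne _ _ (by omega)
    · exact lenne _ _ (by omega)
    · exact lenne _ _ (by omega)
    · exact lenne _ _ (by omega)
    · exact lenne _ _ (by omega)
    · exact ne24
    · exact lenne _ _ (by omega)
    · exact lenne _ _ (by omega)
    · exact lenne _ _ (by omega)
    · exact ne35
    · exact lenne _ _ (by omega)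
    · exact lenne _ _ (by omega)
    · exact lenne _ _ (by omega)
    · exact lenne _ _ (by omega)
end

section
/- The factorization of a word as a product of minimal squares is unique: if X₁²⋯X_n² = Y₁²⋯Y_m² where all X_i² and Y_j² are minimal squares, then n = m and X_i = Y_i for all i. -/
/-- the factorization of a word as a product of minimal squares is
unique: if `X₁²⋯X_n² = Y₁²⋯Y_m²` where each `X_i²` and `Y_j²` is a minimal square
(a square with no square as a proper prefix), then `n = m` and `X_i = Y_i` for all `i`. -/
theorem minimal_square_factorization_unique (Xs Ys : List (List Bool))
    (hX : ∀ X ∈ Xs, X ≠ [] ∧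
      ∀ v : List Bool, v ≠ [] → (v ++ v) <+: (X ++ X) → v = X)
    (hY : ∀ Y ∈ Ys, Y ≠ [] ∧
      ∀ v : List Bool, v ≠ [] → (v ++ v) <+: (Y ++ Y) → v = Y)
    (h : (Xs.map fun X => X ++ X).flatten = (Ys.map fun Y => Y ++ Y).flatten) :
    Xs = Ys := by
  induction Xs generalizing Ys with
  | nil =>
    cases Ys with
    | nil => rfl
    | cons Y Ys =>
      exfalso
      simp only [List.map_nil, List.flatten_nil, List.map_cons, List.flatten_cons] at h
      have hY1 := (hY Y (by simp)).1
      have h2 := h.symm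
      rw [List.append_assoc] at h2
      exact hY1 (List.append_eq_nil_iff.mp h2).1
  | cons X Xs ih =>
    cases Ys with
    | nil =>
      exfalso
      simp only [List.map_nil, List.flatten_nil, List.map_cons, List.flatten_cons] at h
      have hX1 := (hX X (by simp)).1
      rw [List.append_assoc] at h
      rcases List.append_eq_nil_iff.mp h with ⟨h1, -⟩
      exact hX1 h1
    | cons Y Ys =>
      simp only [List.map_cons, List.flatten_cons] at h
      have hXne := (hX X (by simp)).1
      have hYne := (hY Y (by simp)).1
      have p1 : (X ++ X) <+: (Y ++ Y) ++ (Ys.map fun Y => Y ++ Y).flatten :=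
        ⟨(Xs.map fun X => X ++ X).flatten, h⟩
      have p2 : (Y ++ Y) <+: (Y ++ Y) ++ (Ys.map fun Y => Y ++ Y).flatten :=
        ⟨_, rfl⟩
      have hXY : X = Y := by
        rcases List.prefix_or_prefix_of_prefix p1 p2 with hp | hp
        · exact (hY Y (by simp)).2 X hXne hp
        · exact ((hX X (by simp)).2 Y hYne hp).symm
      subst hXY
      have h' : (Xs.map fun X => X ++ X).flatten = (Ys.map fun Y => Y ++ Y).flatten :=
        List.append_cancel_left h
      have := ih Ys (fun Z hZ => hX Z (List.mem_cons_of_mem _ hZ))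
        (fun Z hZ => hY Z (List.mem_cons_of_mem _ hZ)) h'
      rw [this]
end

section
/- Let α ∈ (0,1/2) be irrational, and let u, v be (semi)standard words of slope α with |u| > |v|. If u is a prefix of some power of v, then u = s_{k,ℓ} and v = s_{k−1} for some k ≥ 2 with 0 < ℓ ≤ a_k. -/
/-- The standard words of slope `α = [0; a₁, a₂, …]` (with `a₁ ≥ 2`):
`s₀ = 0`, `s₁ = 0^{a₁−1}1`, `s_k = s_{k−1}^{a_k} s_{k−2}`. -/
noncomputable def stdW (α : ℝ) : ℕ → List Bool
  | 0 => [false]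
  | 1 => List.replicate ((cfA α 1).toNat - 1) false ++ [true]
  | k + 2 => List.flatten (List.replicate ((cfA α (k + 2)).toNat) (stdW α (k + 1))) ++ stdW α k

/-- `w` is a standard or semistandard word of slope `α`
(`s_{k,ℓ} = s_{k−1}^ℓ s_{k−2}` for `k ≥ 2`, `0 < ℓ < a_k`). -/
def SStd (α : ℝ) (w : List Bool) : Prop :=
  (∃ k : ℕ, w = stdW α k) ∨
  (∃ k ℓ : ℕ, 2 ≤ k ∧ 0 < ℓ ∧ (ℓ : ℤ) < cfA α k ∧
    w = List.flatten (List.replicate ℓ (stdW α (k - 1))) ++ stdW α (k - 2))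

/-- `exch` exchanges the first two letters of a word. -/
def exch : List Bool → List Bool
  | x :: y :: t => y :: x :: t
  | l => l

namespace StdAux

open List

set_option linter.deprecated false
set_option linter.unusedSectionVars false

/-- the `n`-th power of a word -/
def pw (n : ℕ) (l : List Bool) : List Bool := (List.replicate n l).flatten

lemma pw_zero (l : List Bool) : pw 0 l = [] := rfl

lemma pw_succ (n : ℕ) (l : List Bool) : pw (n + 1) l = l ++ pw n l := rfl

lemma pw_one (l : List Bool) : pw 1 l = l := by simp [pw]

lemma pw_add (m n : ℕ) (l : List Bool) : pw (m + n) l = pw m l ++ pw n l := by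
  induction m with
  | zero => simp [pw_zero]
  | succ m ih => rw [Nat.succ_add, pw_succ, pw_succ, ih, append_assoc]

lemma pw_comm (n : ℕ) (l : List Bool) : l ++ pw n l = pw n l ++ l := by
  induction n with
  | zero => simp [pw_zero]
  | succ n ih => rw [pw_succ, ih, ← append_assoc, ih]

lemma pw_length (n : ℕ) (l : List Bool) : (pw n l).length = n * l.length := by
  induction n with
  | zero => simp [pw_zero]
  | succ n ih => rw [pw_succ, length_append, ih]; ring

lemma pw_prefix (l : List Bool) {m n : ℕ} (h : m ≤ n) : pw m l <+: pw n l :=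
  ⟨pw (n - m) l, by rw [← pw_add]; congr 1; omega⟩

lemma pw_false (n : ℕ) : pw n [false] = List.replicate n false := by
  induction n with
  | zero => rfl
  | succ n ih => rw [pw_succ, ih, replicate_succ]; rfl

/-- `t <+: s → ℓ ≤ m → s^ℓ t <+: s^m t`. -/
lemma pw_append_prefix {t s : List Bool} (h : t <+: s) {ℓ m : ℕ} (hlm : ℓ ≤ m) :
    pw ℓ s ++ t <+: pw m s ++ t := by
  rw [show m = ℓ + (m - ℓ) by omega, pw_add, append_assoc]
  rw [prefix_append_right_inj]
  rcases Nat.eq_zero_or_pos (m - ℓ) with h0 | h0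
  · rw [h0, pw_zero, nil_append]
  · rw [show m - ℓ = (m - ℓ - 1) + 1 by omega, pw_succ, append_assoc]
    exact h.trans (prefix_append _ _)

variable {α : ℝ}

lemma stdW_step (k : ℕ) :
    stdW α (k + 2) = pw ((cfA α (k + 2)).toNat) (stdW α (k + 1)) ++ stdW α k := rfl

section

variable (hA1 : 2 ≤ (cfA α 1).toNat) (hA : ∀ n, 1 ≤ n → 1 ≤ (cfA α n).toNat)

include hA1 in
lemma len1 : (stdW α 1).length = (cfA α 1).toNat := by
  show (List.replicate ((cfA α 1).toNat - 1) false ++ [true]).length = _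
  simp; omega

lemma len_step (k : ℕ) : (stdW α (k + 2)).length
    = (cfA α (k + 2)).toNat * (stdW α (k + 1)).length + (stdW α k).length := by
  rw [stdW_step, length_append, pw_length]

lemma len_pos : ∀ k, 1 ≤ (stdW α k).length := by
  intro k
  induction k using Nat.twoStepInduction with
  | zero => simp [stdW]
  | one => show 1 ≤ (List.replicate _ false ++ [true]).length; simp
  | more k ih ih2 => rw [len_step]; omega

include hA1 hA in
lemma len_lt_succ : ∀ k, (stdW α k).length < (stdW α (k + 1)).length := by
  intro k
  cases k with
  | zero =>
    rw [len1 hA1]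
    show (stdW α 0).length < _
    simp [stdW]; omega
  | succ k =>
    rw [len_step]
    have h1 := hA (k + 2) (by omega)
    have h2 := len_pos (α := α) (k + 1)
    have h3 := len_pos (α := α) k
    nlinarith

include hA1 hA in
lemma len_mono : StrictMono (fun k => (stdW α k).length) :=
  strictMono_nat_of_lt_succ (len_lt_succ hA1 hA)

include hA1 hA in
lemma len_le {j k : ℕ} (h : j ≤ k) : (stdW α j).length ≤ (stdW α k).length :=
  (len_mono hA1 hA).monotone h

include hA1 hA in
lemma std_prefix_succ (k : ℕ) : stdW α k <+: stdW α (k + 1) := by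
  cases k with
  | zero =>
    show [false] <+: List.replicate ((cfA α 1).toNat - 1) false ++ [true]
    refine IsPrefix.trans ?_ (prefix_append _ _)
    rw [show ((cfA α 1).toNat - 1) = ((cfA α 1).toNat - 2) + 1 by omega, replicate_succ]
    exact ⟨List.replicate ((cfA α 1).toNat - 2) false, rfl⟩
  | succ k =>
    rw [stdW_step]
    refine IsPrefix.trans ?_ (prefix_append _ _)
    have := pw_prefix (stdW α (k + 1)) (hA (k + 2) (by omega))
    rwa [pw_one] at this

include hA1 hA in
lemma std_prefix {j k : ℕ} (h : j ≤ k) : stdW α j <+: stdW α k := by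
  induction k with
  | zero => rw [Nat.le_zero.mp h]
  | succ k ih =>
    rcases Nat.lt_or_ge j (k + 1) with h' | h'
    · exact (ih (by omega)).trans (std_prefix_succ hA1 hA k)
    · rw [show j = k + 1 by omega]

include hA1 hA in
lemma swap_lemma : ∀ j : ℕ, ∃ (p : List Bool) (x y : Bool), x ≠ y ∧
    stdW α (j + 1) ++ stdW α j = p ++ [x, y] ∧
    stdW α j ++ stdW α (j + 1) = p ++ [y, x] := by
  intro j
  induction j with
  | zero =>
    refine ⟨List.replicate ((cfA α 1).toNat - 1) false, true, false, by simp, ?_, ?_⟩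
    · show (List.replicate _ false ++ [true]) ++ [false] = _
      simp
    · show [false] ++ (List.replicate ((cfA α 1).toNat - 1) false ++ [true]) = _
      rw [← append_assoc]
      rw [show ([false] : List Bool) = List.replicate 1 false by rfl]
      rw [← replicate_add, Nat.add_comm 1, replicate_add, append_assoc]
      rfl
  | succ j ih =>
    obtain ⟨p, x, y, hxy, h1, h2⟩ := ih
    refine ⟨pw ((cfA α (j + 2)).toNat) (stdW α (j + 1)) ++ p, y, x, Ne.symm hxy, ?_, ?_⟩
    · rw [stdW_step, append_assoc, h2, append_assoc]
    · rw [stdW_step, ← append_assoc, pw_comm, append_assoc, h1, append_assoc]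

include hA1 hA in
lemma swap_ne (j : ℕ) :
    stdW α j ++ stdW α (j + 1) ≠ stdW α (j + 1) ++ stdW α j := by
  obtain ⟨p, x, y, hxy, h1, h2⟩ := swap_lemma hA1 hA (α := α) j
  rw [h1, h2]
  intro h
  have := append_inj_right h rfl
  simp at this
  exact hxy this.2

include hA in
lemma sstd_cases {u : List Bool} (hu : SStd α u) :
    u = stdW α 0 ∨ u = stdW α 1 ∨
    ∃ j ℓ : ℕ, 1 ≤ ℓ ∧ ℓ ≤ (cfA α (j + 2)).toNat ∧
      u = pw ℓ (stdW α (j + 1)) ++ stdW α j := by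
  rcases hu with ⟨k, hk⟩ | ⟨k, ℓ, hk2, hl0, hlA, hu⟩
  · match k with
    | 0 => exact Or.inl hk
    | 1 => exact Or.inr (Or.inl hk)
    | (j + 2) =>
      refine Or.inr (Or.inr ⟨j, (cfA α (j + 2)).toNat, hA _ (by omega), le_refl _, ?_⟩)
      rw [hk, stdW_step]
  · obtain ⟨j, rfl⟩ : ∃ j, k = j + 2 := ⟨k - 2, by omega⟩
    refine Or.inr (Or.inr ⟨j, ℓ, by omega, by omega, ?_⟩)
    exact hu

lemma sstd_of (j ℓ : ℕ) (h1 : 1 ≤ ℓ) (h2 : ℓ ≤ (cfA α (j + 2)).toNat) :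
    SStd α (pw ℓ (stdW α (j + 1)) ++ stdW α j) := by
  rcases Nat.lt_or_ge ℓ ((cfA α (j + 2)).toNat) with h | h
  · exact Or.inr ⟨j + 2, ℓ, by omega, h1, by omega, rfl⟩
  · have : ℓ = (cfA α (j + 2)).toNat := by omega
    subst this
    exact Or.inl ⟨j + 2, (stdW_step j)⟩

include hA1 hA in
lemma sstd_prefix_std {w : List Bool} (hw : SStd α w) : ∃ K, w <+: stdW α K := by
  rcases sstd_cases hA hw with h | h | ⟨j, ℓ, h1, h2, h⟩
  · exact ⟨0, h ▸ prefix_refl _⟩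
  · exact ⟨1, h ▸ prefix_refl _⟩
  · refine ⟨j + 2, ?_⟩
    rw [h, stdW_step]
    exact pw_append_prefix (std_prefix hA1 hA (by omega)) h2

include hA1 hA in
lemma sstd_comparable {u v : List Bool} (hu : SStd α u) (hv : SStd α v)
    (h : v.length ≤ u.length) : v <+: u := by
  obtain ⟨K1, h1⟩ := sstd_prefix_std hA1 hA hu
  obtain ⟨K2, h2⟩ := sstd_prefix_std hA1 hA hv
  exact prefix_of_prefix_length_le
    (h2.trans (std_prefix hA1 hA (le_max_right K1 K2)))
    (h1.trans (std_prefix hA1 hA (le_max_left K1 K2))) h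

include hA1 hA in
lemma gap {u : List Bool} (hu : SStd α u) (j ℓ : ℕ) (h1 : 1 ≤ ℓ)
    (h2 : ℓ ≤ (cfA α (j + 2)).toNat)
    (hlt : ℓ * (stdW α (j + 1)).length + (stdW α j).length < u.length) :
    (ℓ + 1) * (stdW α (j + 1)).length + (stdW α j).length ≤ u.length := by
  have hQ1 := len_pos (α := α) (j + 1)
  have hQ0 := len_pos (α := α) j
  have hu_gt : (stdW α (j + 1)).length < u.length := by
    have : (stdW α (j + 1)).length ≤ ℓ * (stdW α (j + 1)).length :=
      Nat.le_mul_of_pos_left _ h1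
    omega
  rcases sstd_cases hA hu with h | h | ⟨j', m, hm1, hm2, h⟩
  · exfalso
    have : u.length = 1 := by rw [h]; rfl
    omega
  · exfalso
    have : u.length ≤ (stdW α (j + 1)).length := by
      rw [h]; exact len_le hA1 hA (by omega)
    omega
  · have hlenu : u.length = m * (stdW α (j' + 1)).length + (stdW α j').length := by
      rw [h, length_append, pw_length]
    rcases lt_trichotomy j' j with hj | hj | hj
    · exfalso
      have hle : u.length ≤ (stdW α (j' + 2)).length := by
        rw [len_step, hlenu]
        have := Nat.mul_le_mul_right (stdW α (j' + 1)).length hm2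
        omega
      have : (stdW α (j' + 2)).length ≤ (stdW α (j + 1)).length :=
        len_le hA1 hA (by omega)
      omega
    · rw [hj] at hlenu hm2 h
      have hml : ℓ < m := by
        by_contra hc
        have : m * (stdW α (j + 1)).length ≤ ℓ * (stdW α (j + 1)).length :=
          Nat.mul_le_mul_right _ (by omega)
        omega
      have : (ℓ + 1) * (stdW α (j + 1)).length ≤ m * (stdW α (j + 1)).length :=
        Nat.mul_le_mul_right _ (by omega)
      omega
    · have e1 : (stdW α (j + 2)).length ≤ (stdW α (j' + 1)).length :=
        len_le hA1 hA (by omega)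
      have e2 : (stdW α (j + 1)).length ≤ (stdW α j').length :=
        len_le hA1 hA (by omega)
      have e3 : (stdW α (j' + 1)).length ≤ m * (stdW α (j' + 1)).length :=
        Nat.le_mul_of_pos_left _ hm1
      have e4 : ℓ * (stdW α (j + 1)).length ≤ (cfA α (j + 2)).toNat * (stdW α (j + 1)).length :=
        Nat.mul_le_mul_right _ h2
      have e5 := len_step (α := α) j
      have e6 : (ℓ + 1) * (stdW α (j + 1)).length
          = ℓ * (stdW α (j + 1)).length + (stdW α (j + 1)).length := by ring
      omega

include hA1 hA in
lemma classify {u : List Bool} (hu : SStd α u) (j : ℕ)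
    (hlo : (stdW α (j + 1)).length < u.length)
    (hhi : u.length ≤ (stdW α (j + 2)).length) :
    ∃ ℓ, 1 ≤ ℓ ∧ ℓ ≤ (cfA α (j + 2)).toNat ∧
      u = pw ℓ (stdW α (j + 1)) ++ stdW α j := by
  rcases sstd_cases hA hu with h | h | ⟨j', m, hm1, hm2, h⟩
  · exfalso
    have h1 : u.length = 1 := by rw [h]; rfl
    have := len_pos (α := α) (j + 1)
    omega
  · exfalso
    have : u.length ≤ (stdW α (j + 1)).length := by
      rw [h]; exact len_le hA1 hA (by omega)
    omega
  · have hlenu : u.length = m * (stdW α (j' + 1)).length + (stdW α j').length := by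
      rw [h, length_append, pw_length]
    rcases lt_trichotomy j' j with hj | hj | hj
    · exfalso
      have hle : u.length ≤ (stdW α (j' + 2)).length := by
        rw [len_step, hlenu]
        have := Nat.mul_le_mul_right (stdW α (j' + 1)).length hm2
        omega
      have : (stdW α (j' + 2)).length ≤ (stdW α (j + 1)).length :=
        len_le hA1 hA (by omega)
      omega
    · rw [hj] at hlenu hm2 h
      exact ⟨m, hm1, hm2, h⟩
    · exfalso
      have e1 : (stdW α (j + 2)).length ≤ (stdW α (j' + 1)).length :=
        len_le hA1 hA (by omega)
      have e2 : 1 ≤ (stdW α j').length := len_pos _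
      have e3 : (stdW α (j' + 1)).length ≤ m * (stdW α (j' + 1)).length :=
        Nat.le_mul_of_pos_left _ hm1
      omega

include hA1 hA in
lemma no_long {u : List Bool} (hu : SStd α u) (i n : ℕ)
    (hlong : (stdW α (i + 2)).length < u.length)
    (hp : u <+: pw n (stdW α (i + 1))) : False := by
  have hA2 := hA (i + 2) (by omega)
  have hgap := gap hA1 hA hu i ((cfA α (i + 2)).toNat) hA2 le_rfl
    (by rw [← len_step]; exact hlong)
  have hstep := len_step (α := α) i
  have hexp : ((cfA α (i + 2)).toNat + 1) * (stdW α (i + 1)).length + (stdW α i).length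
      = (stdW α (i + 2)).length + (stdW α (i + 1)).length := by rw [len_step]; ring
  have hwlen : (stdW α (i + 2)).length + (stdW α (i + 1)).length ≤ u.length := by omega
  have hw : SStd α (stdW α (i + 2) ++ stdW α (i + 1)) := by
    have := sstd_of (α := α) (i + 1) 1 le_rfl (hA (i + 3) (by omega))
    rwa [pw_one] at this
  have hwu : stdW α (i + 2) ++ stdW α (i + 1) <+: u :=
    sstd_comparable hA1 hA hu hw (by rw [length_append]; omega)
  have hbig : stdW α (i + 2) ++ stdW α (i + 1)
      <+: pw ((cfA α (i + 2)).toNat + (n + 2)) (stdW α (i + 1)) :=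
    (hwu.trans hp).trans (pw_prefix _ (by omega))
  rw [stdW_step, append_assoc, pw_add, prefix_append_right_inj] at hbig
  have hother : stdW α (i + 1) ++ stdW α i <+: pw (n + 2) (stdW α (i + 1)) := by
    rw [show n + 2 = 1 + (n + 1) by omega, pw_add, pw_one, prefix_append_right_inj]
    refine (std_prefix_succ hA1 hA i).trans ?_
    simpa [pw_one] using pw_prefix (stdW α (i + 1)) (show 1 ≤ n + 1 by omega)
  have heq : stdW α i ++ stdW α (i + 1) = stdW α (i + 1) ++ stdW α i := by
    refine (prefix_of_prefix_length_le hbig hother ?_).eq_of_length ?_ <;>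
      · rw [length_append, length_append]; omega
  exact swap_ne hA1 hA i heq

include hA1 hA in
lemma no_semi {u : List Bool} (hu : SStd α u) (j m n : ℕ) (hm1 : 1 ≤ m)
    (hm2 : m < (cfA α (j + 2)).toNat)
    (hlen : (pw m (stdW α (j + 1)) ++ stdW α j).length < u.length)
    (hp : u <+: pw n (pw m (stdW α (j + 1)) ++ stdW α j)) : False := by
  rw [length_append, pw_length] at hlen
  have hgap := gap hA1 hA hu j m hm1 (by omega) hlen
  have hw : SStd α (pw (m + 1) (stdW α (j + 1)) ++ stdW α j) :=
    sstd_of _ _ (by omega) (by omega)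
  have hwu : pw (m + 1) (stdW α (j + 1)) ++ stdW α j <+: u :=
    sstd_comparable hA1 hA hu hw (by rw [length_append, pw_length]; omega)
  have hsv : stdW α (j + 1) <+: pw m (stdW α (j + 1)) ++ stdW α j := by
    refine IsPrefix.trans ?_ (prefix_append _ _)
    simpa [pw_one] using pw_prefix (stdW α (j + 1)) hm1
  have hbig : pw (m + 1) (stdW α (j + 1)) ++ stdW α j
      <+: pw (n + 2) (pw m (stdW α (j + 1)) ++ stdW α j) :=
    (hwu.trans hp).trans (pw_prefix _ (by omega))
  have hdec : pw (n + 2) (pw m (stdW α (j + 1)) ++ stdW α j)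
      = pw m (stdW α (j + 1)) ++
        (stdW α j ++ pw (n + 1) (pw m (stdW α (j + 1)) ++ stdW α j)) := by
    conv_lhs => rw [show n + 2 = 1 + (n + 1) by omega, pw_add, pw_one]
    rw [append_assoc]
  have hldec : pw (m + 1) (stdW α (j + 1)) ++ stdW α j
      = pw m (stdW α (j + 1)) ++ (stdW α (j + 1) ++ stdW α j) := by
    rw [pw_add m 1, pw_one, append_assoc]
  rw [hdec, hldec, prefix_append_right_inj] at hbig
  have hother : stdW α j ++ stdW α (j + 1)
      <+: stdW α j ++ pw (n + 1) (pw m (stdW α (j + 1)) ++ stdW α j) := by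
    rw [prefix_append_right_inj]
    refine hsv.trans ?_
    simpa [pw_one] using pw_prefix _ (show 1 ≤ n + 1 by omega)
  have heq : stdW α (j + 1) ++ stdW α j = stdW α j ++ stdW α (j + 1) := by
    refine (prefix_of_prefix_length_le hbig hother ?_).eq_of_length ?_ <;>
      · rw [length_append, length_append]; omega
  exact swap_ne hA1 hA j heq.symm

end

end StdAux

/-- for irrational `α ∈ (0,1/2)`, if `u` and `v` are (semi)standard
words of slope `α` with `|u| > |v|` and `u` is a prefix of some power of `v`,
then `u = s_{k,ℓ} = s_{k−1}^ℓ s_{k−2}` and `v = s_{k−1}` for some `k ≥ 2`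
and `0 < ℓ ≤ a_k`. -/
theorem standard_periods (α : ℝ) (hα : Irrational α) (h0 : 0 < α) (h2 : α < 1 / 2)
    (u v : List Bool) (hu : SStd α u) (hv : SStd α v)
    (hlen : v.length < u.length)
    (hpref : ∃ n : ℕ, u <+: List.flatten (List.replicate n v)) :
    ∃ k ℓ : ℕ, 2 ≤ k ∧ 0 < ℓ ∧ (ℓ : ℤ) ≤ cfA α k ∧
      u = List.flatten (List.replicate ℓ (stdW α (k - 1))) ++ stdW α (k - 2) ∧
      v = stdW α (k - 1) := by
  obtain ⟨n, hpref⟩ := hpref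
  change u <+: StdAux.pw n v at hpref
  have hX : ∀ k, Irrational (cfX α k) := by
    intro k
    induction k with
    | zero => exact hα
    | succ k ih =>
      show Irrational (Int.fract (cfX α k))⁻¹
      rw [Int.fract]
      exact (ih.sub_intCast _).inv
  have hA1 : 2 ≤ (cfA α 1).toNat := by
    have hfr : Int.fract α = α := Int.fract_eq_self.mpr ⟨le_of_lt h0, by linarith⟩
    have h1 : (2 : ℝ) < cfX α 1 := by
      show (2 : ℝ) < (Int.fract α)⁻¹
      rw [hfr, lt_inv_comm₀ (by norm_num) h0]
      linarith
    have : (2 : ℤ) ≤ cfA α 1 := Int.le_floor.mpr (by exact_mod_cast h1.le)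
    omega
  have hA : ∀ k, 1 ≤ k → 1 ≤ (cfA α k).toNat := by
    intro k hk
    obtain ⟨k', rfl⟩ : ∃ k', k = k' + 1 := ⟨k - 1, by omega⟩
    have hf0 : 0 < Int.fract (cfX α k') := Int.fract_pos.mpr ((hX k').ne_int _)
    have h1 : (1 : ℝ) < cfX α (k' + 1) := by
      show (1 : ℝ) < (Int.fract (cfX α k'))⁻¹
      exact one_lt_inv_iff₀.mpr ⟨hf0, Int.fract_lt_one _⟩
    have : (1 : ℤ) ≤ cfA α (k' + 1) := Int.le_floor.mpr (by exact_mod_cast h1.le)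
    omega
  rcases StdAux.sstd_cases hA hv with h | h | ⟨j, m, hm1, hm2, h⟩
  · -- v = stdW α 0 = [0] : impossible
    exfalso
    subst h
    have hs1u : stdW α 1 <+: u := by
      rcases StdAux.sstd_cases hA hu with h' | h' | ⟨j, ℓ, h1, h2, h'⟩
      · rw [h'] at hlen; exact absurd hlen (lt_irrefl _)
      · rw [h']
      · rw [h']
        refine (StdAux.std_prefix hA1 hA (show 1 ≤ j + 1 by omega)).trans ?_
        refine List.IsPrefix.trans ?_ (List.prefix_append _ _)
        simpa [StdAux.pw_one] using StdAux.pw_prefix (stdW α (j + 1)) h1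
    have htm : true ∈ u := by
      refine hs1u.sublist.subset ?_
      show true ∈ List.replicate ((cfA α 1).toNat - 1) false ++ [true]
      simp
    rw [show (stdW α 0) = [false] from rfl, StdAux.pw_false] at hpref
    have := List.eq_of_mem_replicate (hpref.sublist.subset htm)
    simp at this
  · -- v = stdW α 1 : k = 2
    subst h
    rcases Nat.lt_or_ge ((stdW α 2).length) u.length with hbig | hsmall
    · exact (StdAux.no_long hA1 hA hu 0 n hbig hpref).elim
    · obtain ⟨ℓ, h1, h2, h3⟩ := StdAux.classify hA1 hA hu 0 hlen hsmall
      refine ⟨2, ℓ, le_rfl, h1, ?_, h3, rfl⟩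
      rw [show (0 : ℕ) + 2 = 2 from rfl] at h2
      have := hA 2 (by omega); omega
  · rcases Nat.lt_or_ge m ((cfA α (j + 2)).toNat) with hlt | hge
    · -- v proper semistandard : impossible
      exfalso
      rw [h] at hlen hpref
      exact StdAux.no_semi hA1 hA hu j m n hm1 hlt hlen hpref
    · -- v = stdW α (j + 2) : k = j + 3
      have hveq : v = stdW α (j + 2) := by
        rw [h, show m = (cfA α (j + 2)).toNat by omega]
        exact (StdAux.stdW_step j).symm
      rw [hveq] at hlen hpref
      rcases Nat.lt_or_ge ((stdW α (j + 3)).length) u.length with hbig | hsmall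
      · exact (StdAux.no_long hA1 hA hu (j + 1) n hbig hpref).elim
      · obtain ⟨ℓ, h1, h2, h3⟩ := StdAux.classify hA1 hA hu (j + 1) hlen hsmall
        refine ⟨j + 3, ℓ, by omega, h1, ?_, h3, hveq⟩
        rw [show j + 1 + 2 = j + 3 by omega] at h2
        have := hA (j + 3) (by omega); omega
end
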